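/- arXiv:1901.07834 — 5 statements merged into one kernel-verified Lean document; each statement's English description precedes it below -/
import Mathlib

section
/- Let n ≥ 1, let A be an n×n real matrix with A ≠ I, and let ‖·‖ be a consistent matrix norm. For every real a with 0 < a ≤ 1/(2‖A−I‖), the matrix t(A−I)+I is invertible for all t ∈ [0,a], and ‖(A−I) · ∫_0^a (t(A−I)+I)^{-1} dt‖ ≤ (3a/2)·‖A−I‖. -/
open MeasureTheory

/-- Entrywise integral of a matrix-valued function over an interval. -/
noncomputable def entryIntegral {n : ℕ} (f : ℝ → Matrix (Fin n) (Fin n) ℝ) (a b : ℝ) :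
    Matrix (Fin n) (Fin n) ℝ :=
  Matrix.of fun i j => ∫ t in a..b, f t i j

noncomputable def matrixContinuousENorm {n : ℕ} : ContinuousENorm (Matrix (Fin n) (Fin n) ℝ) :=
  @SeminormedAddGroup.toContinuousENorm _
    (@Matrix.normedAddCommGroup (Fin n) (Fin n) ℝ _ _ _).toSeminormedAddCommGroup.toSeminormedAddGroup

section Aux

variable {n : ℕ}

attribute [local instance] Matrix.normedAddCommGroup Matrix.normedSpace matrixContinuousENorm

/-- Evaluation of a matrix entry as a continuous linear map (w.r.t. the sup norm). -/
noncomputable def entryCLM (i j : Fin n) : Matrix (Fin n) (Fin n) ℝ →L[ℝ] ℝ :=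
  LinearMap.mkContinuous
    { toFun := fun X => X i j, map_add' := fun _ _ => rfl, map_smul' := fun _ _ => rfl }
    1 (fun X => by rw [one_mul]; exact (norm_le_pi_norm (X i) j).trans (norm_le_pi_norm X i))

lemma entryIntegral_eq_setIntegral (f : ℝ → Matrix (Fin n) (Fin n) ℝ) {a : ℝ} (ha : 0 ≤ a)
    (hf : IntegrableOn f (Set.Icc 0 a) volume) :
    entryIntegral f 0 a = ∫ t in Set.Icc 0 a, f t := by
  ext i j
  have h1 : (∫ t in Set.Icc (0:ℝ) a, f t) i j = ∫ t in Set.Icc (0:ℝ) a, f t i j :=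
    ((entryCLM i j).integral_comp_comm hf).symm
  have h2 : entryIntegral f 0 a i j = ∫ t in (0:ℝ)..a, f t i j := rfl
  rw [h2, h1, intervalIntegral.integral_of_le ha, integral_Icc_eq_integral_Ioc]

lemma N_nonneg (N : Matrix (Fin n) (Fin n) ℝ → ℝ)
    (hN_add : ∀ X Y, N (X + Y) ≤ N X + N Y)
    (hN_smul : ∀ (c : ℝ) (X), N (c • X) = |c| * N X) (X : Matrix (Fin n) (Fin n) ℝ) :
    0 ≤ N X := by
  have h0 : N 0 = 0 := by simpa using hN_smul 0 0
  have hneg : N (-X) = N X := by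
    have := hN_smul (-1) X
    simpa using this
  have := hN_add X (-X)
  rw [add_neg_cancel, h0, hneg] at this
  linarith

lemma N_sum_le (N : Matrix (Fin n) (Fin n) ℝ → ℝ)
    (hN_add : ∀ X Y, N (X + Y) ≤ N X + N Y)
    (hN_smul : ∀ (c : ℝ) (X), N (c • X) = |c| * N X)
    {ι : Type*} (s : Finset ι) (f : ι → Matrix (Fin n) (Fin n) ℝ) :
    N (∑ i ∈ s, f i) ≤ ∑ i ∈ s, N (f i) := by
  classical
  induction s using Finset.induction_on with
  | empty => simp [show N 0 = 0 by simpa using hN_smul 0 0]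
  | insert x s hx ih =>
    rw [Finset.sum_insert hx, Finset.sum_insert hx]
    exact (hN_add _ _).trans (by linarith)

lemma N_continuous (N : Matrix (Fin n) (Fin n) ℝ → ℝ)
    (hN_add : ∀ X Y, N (X + Y) ≤ N X + N Y)
    (hN_smul : ∀ (c : ℝ) (X), N (c • X) = |c| * N X) :
    Continuous N := by
  classical
  set C : ℝ := ∑ p : Fin n × Fin n, N (Matrix.single p.1 p.2 1) with hC
  have hNle : ∀ Z : Matrix (Fin n) (Fin n) ℝ, N Z ≤ C * ‖Z‖ := by
    intro Z
    have hrep : Z = ∑ p : Fin n × Fin n, Z p.1 p.2 • Matrix.single p.1 p.2 1 := by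
      conv_lhs => rw [Matrix.matrix_eq_sum_single Z]
      rw [← Finset.sum_product']
      refine Finset.sum_congr rfl fun p _ => ?_
      rw [Matrix.smul_single, smul_eq_mul, mul_one]
    calc N Z ≤ ∑ p : Fin n × Fin n, N (Z p.1 p.2 • Matrix.single p.1 p.2 1) := by
          conv_lhs => rw [hrep]
          exact N_sum_le N hN_add hN_smul _ _
      _ ≤ ∑ p : Fin n × Fin n, ‖Z‖ * N (Matrix.single p.1 p.2 1) := by
          refine Finset.sum_le_sum fun p _ => ?_
          rw [hN_smul]
          refine mul_le_mul_of_nonneg_right ?_ (N_nonneg N hN_add hN_smul _)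
          calc |Z p.1 p.2| = ‖Z p.1 p.2‖ := rfl
            _ ≤ ‖Z p.1‖ := norm_le_pi_norm (Z p.1) p.2
            _ ≤ ‖Z‖ := norm_le_pi_norm Z p.1
      _ = C * ‖Z‖ := by
          rw [hC, Finset.sum_mul]
          exact Finset.sum_congr rfl fun p _ => mul_comm _ _
  have hdiff : ∀ X Y : Matrix (Fin n) (Fin n) ℝ, N X - N Y ≤ C * ‖X - Y‖ := by
    intro X Y
    have h1 : N X ≤ N Y + N (X - Y) := by
      have := hN_add Y (X - Y)
      simpa using this
    have := hNle (X - Y)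
    linarith
  have hC0 : 0 ≤ C := Finset.sum_nonneg fun p _ => N_nonneg N hN_add hN_smul _
  have hlip : LipschitzWith (Real.toNNReal C) N := by
    refine LipschitzWith.of_dist_le_mul fun X Y => ?_
    rw [Real.dist_eq, Real.coe_toNNReal _ hC0, dist_eq_norm]
    rw [abs_sub_le_iff]
    constructor
    · exact hdiff X Y
    · have := hdiff Y X
      rwa [show Y - X = -(X - Y) from (neg_sub X Y).symm, norm_neg] at this
  exact hlip.continuous

lemma N_convexOn (N : Matrix (Fin n) (Fin n) ℝ → ℝ)
    (hN_add : ∀ X Y, N (X + Y) ≤ N X + N Y)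
    (hN_smul : ∀ (c : ℝ) (X), N (c • X) = |c| * N X) :
    ConvexOn ℝ Set.univ N := by
  refine ⟨convex_univ, fun X _ Y _ p q hp hq hpq => ?_⟩
  calc N (p • X + q • Y) ≤ N (p • X) + N (q • Y) := hN_add _ _
    _ = p * N X + q * N Y := by rw [hN_smul, hN_smul, abs_of_nonneg hp, abs_of_nonneg hq]
    _ = p • N X + q • N Y := rfl

/-- Jensen: the norm of the integral is at most the integral of the norm. -/
lemma N_setIntegral_le (N : Matrix (Fin n) (Fin n) ℝ → ℝ)
    (hN_add : ∀ X Y, N (X + Y) ≤ N X + N Y)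
    (hN_smul : ∀ (c : ℝ) (X), N (c • X) = |c| * N X)
    {a : ℝ} (ha : 0 < a) (h : ℝ → Matrix (Fin n) (Fin n) ℝ)
    (hi : IntegrableOn h (Set.Icc 0 a) volume)
    (hi2 : IntegrableOn (fun t => N (h t)) (Set.Icc 0 a) volume) :
    N (∫ t in Set.Icc 0 a, h t) ≤ ∫ t in Set.Icc 0 a, N (h t) := by
  set μ : Measure ℝ := volume.restrict (Set.Icc 0 a) with hμ
  have hvol : μ Set.univ = ENNReal.ofReal a := by
    rw [hμ, Measure.restrict_apply_univ, Real.volume_Icc, sub_zero]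
  haveI : IsFiniteMeasure μ := ⟨by rw [hvol]; exact ENNReal.ofReal_lt_top⟩
  haveI : NeZero μ := ⟨by
    intro h0
    rw [h0] at hvol
    simp only [Measure.coe_zero, Pi.zero_apply] at hvol
    have : ENNReal.ofReal a ≠ 0 := by
      simp [ENNReal.ofReal_eq_zero, not_le, ha]
    exact this hvol.symm⟩
  have hJ := (N_convexOn N hN_add hN_smul).map_average_le
    (N_continuous N hN_add hN_smul).continuousOn isClosed_univ
    (Filter.Eventually.of_forall fun _ => Set.mem_univ _) hi hi2
  rw [average_eq, average_eq, measureReal_def, ← hμ, hvol, ENNReal.toReal_ofReal ha.le, hN_smul] at hJ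
  rw [abs_of_nonneg (inv_nonneg.mpr ha.le), smul_eq_mul] at hJ
  have := mul_le_mul_of_nonneg_left hJ ha.le
  rw [← mul_assoc, ← mul_assoc, mul_inv_cancel₀ ha.ne', one_mul, one_mul] at this
  exact this

end Aux

/-- Lemma 2.1: left-endpoint truncation bound. -/
theorem stmt_0 {n : ℕ} (hn : 1 ≤ n) (A : Matrix (Fin n) (Fin n) ℝ) (hA : A ≠ 1)
    (N : Matrix (Fin n) (Fin n) ℝ → ℝ)
    (hN_def : ∀ X, N X = 0 ↔ X = 0)
    (hN_add : ∀ X Y, N (X + Y) ≤ N X + N Y)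
    (hN_smul : ∀ (c : ℝ) (X), N (c • X) = |c| * N X)
    (hN_mul : ∀ X Y, N (X * Y) ≤ N X * N Y)
    (a : ℝ) (ha0 : 0 < a) (ha : a ≤ 1 / (2 * N (A - 1))) :
    (∀ t ∈ Set.Icc (0 : ℝ) a, IsUnit (t • (A - 1) + 1)) ∧
      N ((A - 1) * entryIntegral (fun t => (t • (A - 1) + 1)⁻¹) 0 a) ≤
        3 * a / 2 * N (A - 1) := by
  classical
  set B : Matrix (Fin n) (Fin n) ℝ := A - 1 with hB
  set b : ℝ := N B with hbdef
  have hB0 : B ≠ 0 := fun h => hA (by rwa [hB, sub_eq_zero] at h)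
  have hb0 : 0 < b := lt_of_le_of_ne (N_nonneg N hN_add hN_smul B)
    (fun h => hB0 ((hN_def B).mp h.symm))
  have hab : a * b ≤ 1 / 2 := by
    rw [le_div_iff₀ (by positivity)] at ha
    linarith
  -- Part 1: invertibility
  have hunit : ∀ t ∈ Set.Icc (0 : ℝ) a, IsUnit (t • B + 1) := by
    intro t ht
    obtain ⟨ht0, hta⟩ := ht
    rw [Matrix.isUnit_iff_isUnit_det, isUnit_iff_ne_zero]
    intro hdet0
    obtain ⟨v, hv0, hveq⟩ := (Matrix.exists_mulVec_eq_zero_iff).mpr hdet0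
    rcases eq_or_lt_of_le ht0 with rfl | htpos
    · simp at hdet0
    · have hmv : t • (B.mulVec v) + v = 0 := by
        rw [← hveq, Matrix.add_mulVec, Matrix.smul_mulVec, Matrix.one_mulVec]
      have hmv' : B.mulVec v = (-t⁻¹) • v := by
        funext i
        have h1 : t * (B.mulVec v) i + v i = 0 := by
          have := congrFun hmv i
          simpa using this
        have : (B.mulVec v) i = -t⁻¹ * v i := by
          field_simp at h1 ⊢
          linarith
        simpa using this
      set V : Matrix (Fin n) (Fin n) ℝ := Matrix.of (fun i _ => v i) with hV
      have hV0 : V ≠ 0 := by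
        intro h
        apply hv0
        funext i
        have := congrFun (congrFun h i) ⟨0, hn⟩
        simpa [hV] using this
      have hNV : 0 < N V := lt_of_le_of_ne (N_nonneg N hN_add hN_smul V)
        (fun h => hV0 ((hN_def V).mp h.symm))
      have hBV : B * V = (-t⁻¹) • V := by
        ext i j
        have : (B * V) i j = (B.mulVec v) i := by
          simp [hV, Matrix.mul_apply, Matrix.mulVec, dotProduct]
        rw [this, hmv']
        simp [hV]
      have h1 : N (B * V) = t⁻¹ * N V := by
        rw [hBV, hN_smul, abs_neg, abs_of_nonneg (inv_nonneg.mpr ht0)]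
      have h2 : N (B * V) ≤ b * N V := hN_mul B V
      have h3 : t⁻¹ ≤ b := by
        have := h1 ▸ h2
        exact le_of_mul_le_mul_right (by linarith) hNV
      have ht1 : t * t⁻¹ = 1 := mul_inv_cancel₀ htpos.ne'
      have h5 : t * t⁻¹ ≤ t * b := mul_le_mul_of_nonneg_left h3 ht0
      have h6 : t * b ≤ a * b := mul_le_mul_of_nonneg_right hta hb0.le
      linarith
  refine ⟨hunit, ?_⟩
  -- Part 2
  set F : ℝ → Matrix (Fin n) (Fin n) ℝ := fun t => (t • B + 1)⁻¹ with hF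
  set G : ℝ → Matrix (Fin n) (Fin n) ℝ := fun t => B * F t with hG
  have hdetne : ∀ t ∈ Set.Icc (0 : ℝ) a, (t • B + 1).det ≠ 0 := fun t ht => by
    have := (Matrix.isUnit_iff_isUnit_det _).mp (hunit t ht)
    exact this.ne_zero
  -- continuity
  have hM : Continuous fun t : ℝ => t • B + 1 :=
    ((continuous_id.smul continuous_const).add continuous_const)
  have hFcont : ContinuousOn F (Set.Icc 0 a) := by
    have heq : Set.EqOn F (fun t => ((t • B + 1).det)⁻¹ • (t • B + 1).adjugate)
        (Set.Icc 0 a) := by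
      intro t ht
      simp only [hF]
      rw [Matrix.inv_def, Ring.inverse_eq_inv']
    refine ContinuousOn.congr ?_ heq
    exact (hM.matrix_det.continuousOn.inv₀ hdetne).smul hM.matrix_adjugate.continuousOn
  have hGcont : ContinuousOn G (Set.Icc 0 a) := continuousOn_const.mul hFcont
  have hHcont : ContinuousOn (fun t => t • (B * G t)) (Set.Icc 0 a) :=
    continuousOn_id.smul (continuousOn_const.mul hGcont)
  -- entry interval integrability
  have hFentry : ∀ i j, IntervalIntegrable (fun t => F t i j) volume 0 a := by
    intro i j
    apply ContinuousOn.intervalIntegrable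
    rw [Set.uIcc_of_le ha0.le]
    exact ((continuous_apply j).comp (continuous_apply i)).comp_continuousOn hFcont
  have hGentry : ∀ i j, IntervalIntegrable (fun t => G t i j) volume 0 a := by
    intro i j
    apply ContinuousOn.intervalIntegrable
    rw [Set.uIcc_of_le ha0.le]
    exact ((continuous_apply j).comp (continuous_apply i)).comp_continuousOn hGcont
  have hHentry : ∀ i j, IntervalIntegrable (fun t => (t • (B * G t)) i j) volume 0 a := by
    intro i j
    apply ContinuousOn.intervalIntegrable
    rw [Set.uIcc_of_le ha0.le]
    exact ((continuous_apply j).comp (continuous_apply i)).comp_continuousOn hHcont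
  -- key identity: F t = 1 - t • G t on Icc
  have hid : ∀ t ∈ Set.Icc (0 : ℝ) a, F t = 1 - t • G t := by
    intro t ht
    have hmul : (t • B + 1) * F t = 1 :=
      Matrix.mul_nonsing_inv _ ((Matrix.isUnit_iff_isUnit_det _).mp (hunit t ht))
    have : t • (B * F t) + F t = 1 := by
      rw [← hmul, add_mul, one_mul, Matrix.smul_mul]
    rw [hG]
    rw [eq_sub_iff_add_eq, add_comm]
    exact this
  have hGid : ∀ t ∈ Set.Icc (0 : ℝ) a, G t = B - t • (B * G t) := by
    intro t ht
    calc G t = B * F t := rfl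
      _ = B * (1 - t • G t) := by rw [hid t ht]
      _ = B - t • (B * G t) := by
          rw [Matrix.mul_sub, Matrix.mul_one, Matrix.mul_smul]
  -- bound on N (G t)
  have hGbound : ∀ t ∈ Set.Icc (0 : ℝ) a, N (G t) ≤ 2 * b := by
    intro t ht
    obtain ⟨ht0, hta⟩ := ht
    have h1 : N (G t) ≤ b + t * (b * N (G t)) := by
      calc N (G t) = N (B + (-(t • (B * G t)))) := by
            rw [← sub_eq_add_neg, ← hGid t ⟨ht0, hta⟩]
        _ ≤ N B + N (-(t • (B * G t))) := hN_add _ _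
        _ = b + N ((-t) • (B * G t)) := by rw [neg_smul]
        _ = b + |t| * N (B * G t) := by rw [hN_smul, abs_neg]
        _ ≤ b + t * (b * N (G t)) := by
            rw [abs_of_nonneg ht0]
            have := hN_mul B (G t)
            nlinarith [N_nonneg N hN_add hN_smul (B * G t),
              N_nonneg N hN_add hN_smul (G t)]
    have htb : t * b ≤ 1 / 2 := by nlinarith
    nlinarith [N_nonneg N hN_add hN_smul (G t)]
  -- B * entryIntegral F = entryIntegral G
  have hstep1 : B * entryIntegral F 0 a = entryIntegral G 0 a := by
    ext i j
    have : (B * entryIntegral F 0 a) i j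
        = ∑ k, B i k * ∫ t in (0:ℝ)..a, F t k j := by
      simp [Matrix.mul_apply, entryIntegral]
    rw [this]
    have : entryIntegral G 0 a i j = ∫ t in (0:ℝ)..a, (B * F t) i j := rfl
    rw [this]
    have : ∀ k, B i k * (∫ t in (0:ℝ)..a, F t k j)
        = ∫ t in (0:ℝ)..a, B i k * F t k j := fun k =>
      (intervalIntegral.integral_const_mul _ _).symm
    simp_rw [this]
    rw [← intervalIntegral.integral_finset_sum]
    · apply intervalIntegral.integral_congr
      intro t _
      simp [Matrix.mul_apply]
    · intro k _
      exact (hFentry k j).const_mul _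
  -- entryIntegral G = a • B - entryIntegral H
  have hstep2 : entryIntegral G 0 a
      = a • B - entryIntegral (fun t => t • (B * G t)) 0 a := by
    ext i j
    have h1 : entryIntegral G 0 a i j = ∫ t in (0:ℝ)..a, G t i j := rfl
    have h2 : (a • B - entryIntegral (fun t => t • (B * G t)) 0 a) i j
        = a * B i j - ∫ t in (0:ℝ)..a, (t • (B * G t)) i j := rfl
    rw [h1, h2]
    have hcongr : ∫ t in (0:ℝ)..a, G t i j
        = ∫ t in (0:ℝ)..a, (B i j - (t • (B * G t)) i j) := by
      apply intervalIntegral.integral_congr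
      intro t ht
      rw [Set.uIcc_of_le ha0.le] at ht
      have := hGid t ht
      have := congrFun (congrFun this i) j
      simpa [Matrix.sub_apply] using this
    rw [hcongr, intervalIntegral.integral_sub intervalIntegrable_const (hHentry i j)]
    simp
  -- integrability of H on Icc (matrix-valued, for Jensen)
  letI : NormedAddCommGroup (Matrix (Fin n) (Fin n) ℝ) := Matrix.normedAddCommGroup
  letI : NormedSpace ℝ (Matrix (Fin n) (Fin n) ℝ) := Matrix.normedSpace
  letI : ContinuousENorm (Matrix (Fin n) (Fin n) ℝ) := matrixContinuousENorm
  have hHint : IntegrableOn (fun t => t • (B * G t)) (Set.Icc 0 a) volume :=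
    hHcont.integrableOn_compact isCompact_Icc
  have hNHcont : ContinuousOn (fun t => N (t • (B * G t))) (Set.Icc 0 a) :=
    (N_continuous N hN_add hN_smul).comp_continuousOn hHcont
  have hNHint : IntegrableOn (fun t => N (t • (B * G t))) (Set.Icc 0 a) volume :=
    hNHcont.integrableOn_compact isCompact_Icc
  -- norm bound on entryIntegral H
  have hstep3 : N (entryIntegral (fun t => t • (B * G t)) 0 a) ≤ a ^ 2 * b ^ 2 := by
    rw [entryIntegral_eq_setIntegral _ ha0.le hHint]
    refine (N_setIntegral_le N hN_add hN_smul ha0 _ hHint hNHint).trans ?_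
    have hptwise : ∀ t ∈ Set.Icc (0 : ℝ) a, N (t • (B * G t)) ≤ t * (2 * b ^ 2) := by
      intro t ht
      obtain ⟨ht0, hta⟩ := ht
      rw [hN_smul, abs_of_nonneg ht0]
      have h1 : N (B * G t) ≤ b * (2 * b) := by
        have := hN_mul B (G t)
        have := hGbound t ⟨ht0, hta⟩
        nlinarith [N_nonneg N hN_add hN_smul (G t)]
      nlinarith
    have hmono : ∫ t in Set.Icc (0:ℝ) a, N (t • (B * G t))
        ≤ ∫ t in Set.Icc (0:ℝ) a, t * (2 * b ^ 2) := by
      refine setIntegral_mono_on hNHint ?_ measurableSet_Icc hptwise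
      exact (Continuous.mul continuous_id continuous_const).integrableOn_Icc
    refine hmono.trans ?_
    have : ∫ t in Set.Icc (0:ℝ) a, t * (2 * b ^ 2)
        = (∫ t in (0:ℝ)..a, t) * (2 * b ^ 2) := by
      rw [intervalIntegral.integral_of_le ha0.le, ← integral_Icc_eq_integral_Ioc,
        ← integral_mul_const]
    rw [this, integral_id]
    ring_nf
    nlinarith [sq_nonneg a, sq_nonneg b]
  -- final bound
  have hfinal : N (B * entryIntegral F 0 a) ≤ 3 * a / 2 * b := by
    rw [hstep1, hstep2]
    have h1 : N (a • B - entryIntegral (fun t => t • (B * G t)) 0 a)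
        ≤ N (a • B) + N (entryIntegral (fun t => t • (B * G t)) 0 a) := by
      rw [sub_eq_add_neg]
      refine (hN_add _ _).trans ?_
      have : N (-(entryIntegral (fun t => t • (B * G t)) 0 a))
          = N (entryIntegral (fun t => t • (B * G t)) 0 a) := by
        rw [← neg_one_smul ℝ, hN_smul]
        simp
      rw [this]
    have h2 : N (a • B) = a * b := by rw [hN_smul, abs_of_nonneg ha0.le]
    have h3 : a ^ 2 * b ^ 2 ≤ a * b / 2 := by
      nlinarith [mul_le_mul_of_nonneg_right hab (mul_nonneg ha0.le hb0.le)]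
    linarith [hstep3]
  exact hfinal
end

section
/- Let n ≥ 1, let A be an invertible n×n real matrix, and let ‖·‖ be a consistent matrix norm. For every real b with 2‖A^{-1}‖/(2‖A^{-1}‖+1) ≤ b < 1, the matrix t(A−I)+I is invertible for all t ∈ [b,1], and ‖(A−I) · ∫_b^1 (t(A−I)+I)^{-1} dt‖ ≤ (−log(b) + (1−b)/(2b)) · ‖A−I‖·‖A^{-1}‖. -/
open MeasureTheory

lemma neg_log_one_sub_le {u : ℝ} (h0 : 0 ≤ u) (h1 : u ≤ 1/2) :
    -Real.log (1 - u) ≤ u + u^2 := by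
  have h2 : (0:ℝ) < 1 - u := by linarith
  have hq := Real.quadratic_le_exp_of_nonneg (by positivity : (0:ℝ) ≤ u + u^2)
  have hexp : Real.exp (-(u + u^2)) ≤ 1 - u := by
    rw [Real.exp_neg, inv_le_comm₀ (Real.exp_pos _) h2]
    calc (1 - u)⁻¹ ≤ 1 + (u + u^2) + (u + u^2)^2 / 2 := by
          rw [inv_le_iff_one_le_mul₀ h2]
          nlinarith [sq_nonneg u, pow_le_pow_left₀ h0 h1 2, pow_le_pow_left₀ h0 h1 3]
      _ ≤ Real.exp (u + u^2) := hq
  have := Real.log_le_log (Real.exp_pos _) hexp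
  rw [Real.log_exp] at this
  linarith


lemma unit_of_small {n : ℕ} (hn : 1 ≤ n) (N : Matrix (Fin n) (Fin n) ℝ → ℝ)
    (hN_def : ∀ X, N X = 0 ↔ X = 0)
    (hN_smul : ∀ (c : ℝ) (X), N (c • X) = |c| * N X)
    (hN_mul : ∀ X Y, N (X * Y) ≤ N X * N Y)
    (hN0 : ∀ X, 0 ≤ N X)
    (M : Matrix (Fin n) (Fin n) ℝ) (hM : N M < 1) : IsUnit (1 + M) := by
  by_contra h
  rw [Matrix.isUnit_iff_isUnit_det, isUnit_iff_ne_zero, not_ne_iff] at h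
  obtain ⟨v, hv0, hveq⟩ := (Matrix.exists_mulVec_eq_zero_iff).2 h
  set V : Matrix (Fin n) (Fin n) ℝ := Matrix.of (fun i _ => v i) with hVdef
  have hMV : M * V = -V := by
    ext i j
    have h1 := congrFun hveq i
    simp only [Matrix.add_mulVec, Matrix.one_mulVec, Pi.add_apply, Pi.zero_apply] at h1
    simp only [Matrix.mul_apply, Matrix.neg_apply, hVdef, Matrix.of_apply]
    have h2 : M.mulVec v i = ∑ x : Fin n, M i x * v x := by
      simp [Matrix.mulVec, dotProduct]
    rw [h2] at h1
    linarith
  have hVne : V ≠ 0 := by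
    obtain ⟨i, hi⟩ := Function.ne_iff.1 hv0
    intro hV
    exact hi (by simpa [hVdef] using congrFun (congrFun hV i) ⟨0, hn⟩)
  have hNV : 0 < N V := (hN0 V).lt_of_ne' (fun h' => hVne ((hN_def V).1 h'))
  have : N V ≤ N M * N V := by
    have h2 := hN_mul M V
    rw [hMV] at h2
    have : N (-V) = N V := by
      have := hN_smul (-1) V; simpa using this
    linarith
  nlinarith

set_option maxHeartbeats 1000000 in
/-- Lemma 2.2: right-endpoint truncation bound. -/
theorem stmt_2 {n : ℕ} (hn : 1 ≤ n) (A : Matrix (Fin n) (Fin n) ℝ) (hA : IsUnit A)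
    (N : Matrix (Fin n) (Fin n) ℝ → ℝ)
    (hN_def : ∀ X, N X = 0 ↔ X = 0)
    (hN_add : ∀ X Y, N (X + Y) ≤ N X + N Y)
    (hN_smul : ∀ (c : ℝ) (X), N (c • X) = |c| * N X)
    (hN_mul : ∀ X Y, N (X * Y) ≤ N X * N Y)
    (b : ℝ) (hb1 : 2 * N A⁻¹ / (2 * N A⁻¹ + 1) ≤ b) (hb2 : b < 1) :
    (∀ t ∈ Set.Icc b 1, IsUnit (t • (A - 1) + 1)) ∧
      N ((A - 1) * entryIntegral (fun t => (t • (A - 1) + 1)⁻¹) b 1) ≤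
        (-Real.log b + (1 - b) / (2 * b)) * (N (A - 1) * N A⁻¹) := by
  -- basic facts about N
  have hN0 : N 0 = 0 := (hN_def 0).2 rfl
  have hNneg : ∀ X, N (-X) = N X := fun X => by
    have := hN_smul (-1) X; simpa using this
  have hNnonneg : ∀ X, 0 ≤ N X := fun X => by
    have h := hN_add X (-X)
    rw [add_neg_cancel, hN0, hNneg] at h; linarith
  set c := N A⁻¹ with hc_def
  have hdetA : IsUnit A.det := (Matrix.isUnit_iff_isUnit_det A).1 hA
  have hAA : A * A⁻¹ = 1 := Matrix.mul_nonsing_inv A hdetA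
  have hA'A : A⁻¹ * A = 1 := Matrix.nonsing_inv_mul A hdetA
  have hc0 : 0 < c := by
    rcases (hNnonneg A⁻¹).eq_or_lt with h | h
    · exfalso
      have hinv0 : A⁻¹ = 0 := (hN_def A⁻¹).1 h.symm
      have : (1 : Matrix (Fin n) (Fin n) ℝ) = 0 := by rw [← hAA, hinv0, mul_zero]
      have := congrFun (congrFun this ⟨0, hn⟩) ⟨0, hn⟩
      simp [Matrix.one_apply] at this
    · exact h
  have hb0 : 0 < b := lt_of_lt_of_le (by positivity) hb1
  have hkey : 2 * c * (1 - b) ≤ b := by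
    have h := (div_le_iff₀ (by positivity : (0:ℝ) < 2*c+1)).1 hb1
    nlinarith
  -- the invertibility lemma
  have hunit : ∀ M : Matrix (Fin n) (Fin n) ℝ, N M < 1 → IsUnit (1 + M) :=
    fun M hM => unit_of_small hn N hN_def hN_smul hN_mul hNnonneg M hM
  -- decomposition for t ∈ [b,1]
  have hb1' : b ≤ 1 := hb2.le
  have hsc : ∀ t ∈ Set.Icc b 1, (1-t)/t * c ≤ 1/2 := by
    rintro t ⟨ht1, ht2⟩
    have ht0 : 0 < t := lt_of_lt_of_le hb0 ht1
    have h1 : (1-t)/t ≤ (1-b)/b := by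
      rw [div_le_div_iff₀ ht0 hb0]; nlinarith
    have h2 : (1-b)/b * c ≤ 1/2 := by
      rw [div_mul_eq_mul_div, div_le_iff₀ hb0]; nlinarith
    calc (1-t)/t * c ≤ (1-b)/b * c := by
          apply mul_le_mul_of_nonneg_right h1 hc0.le
      _ ≤ 1/2 := h2
  have hfact : ∀ t ∈ Set.Icc b 1,
      t • (A - 1) + 1 = (t • (1 : Matrix (Fin n) (Fin n) ℝ)) * A * (1 + ((1-t)/t) • A⁻¹) := by
    rintro t ⟨ht1, ht2⟩
    have ht0 : t ≠ 0 := (lt_of_lt_of_le hb0 ht1).ne'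
    rw [Matrix.smul_mul, Matrix.one_mul, Matrix.mul_add, Matrix.mul_one, Matrix.smul_mul,
      Matrix.mul_smul, hAA, smul_smul]
    have : t * ((1-t)/t) = 1 - t := by field_simp
    rw [this, smul_sub, sub_smul, one_smul]
    abel
  have hunits : ∀ t ∈ Set.Icc b 1, IsUnit (t • (A - 1) + 1) := by
    intro t ht
    rw [hfact t ht]
    have ht0 : t ≠ 0 := (lt_of_lt_of_le hb0 ht.1).ne'
    have hu1 : IsUnit (t • (1 : Matrix (Fin n) (Fin n) ℝ)) := by
      refine ⟨⟨t • 1, t⁻¹ • 1, ?_, ?_⟩, rfl⟩ <;>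
        · rw [Matrix.smul_mul, Matrix.one_mul, smul_smul]
          first
          | rw [mul_inv_cancel₀ ht0, one_smul]
          | rw [inv_mul_cancel₀ ht0, one_smul]
    have hu3 : IsUnit (1 + ((1-t)/t) • A⁻¹) := by
      apply hunit
      rw [hN_smul]
      have hs0 : 0 ≤ (1-t)/t :=
        div_nonneg (by linarith [ht.2]) (lt_of_lt_of_le hb0 ht.1).le
      rw [abs_of_nonneg hs0]
      have := hsc t ht
      linarith
    exact (hu1.mul hA).mul hu3
  refine ⟨hunits, ?_⟩
  set B : ℝ → Matrix (Fin n) (Fin n) ℝ := fun t => (t • (A - 1) + 1)⁻¹ with hBdef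
  -- inverse identities
  have hdet : ∀ t ∈ Set.Icc b 1, IsUnit (t • (A - 1) + 1).det := fun t ht =>
    (Matrix.isUnit_iff_isUnit_det _).1 (hunits t ht)
  have hinv : ∀ t ∈ Set.Icc b 1, (t • (A - 1) + 1) * B t = 1 := fun t ht =>
    Matrix.mul_nonsing_inv _ (hdet t ht)
  -- denominator positive
  have hden : ∀ t ∈ Set.Icc b 1, 0 < (1+c)*t - c := by
    rintro t ⟨ht1, ht2⟩
    nlinarith
  -- pointwise norm bound
  have hφ : ∀ t ∈ Set.Icc b 1, N (B t) ≤ c / ((1+c)*t - c) := by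
    intro t ht
    obtain ⟨ht1, ht2⟩ := ht
    have ht0 : 0 < t := lt_of_lt_of_le hb0 ht1
    -- identity : B t = t⁻¹ • (A⁻¹ - (1-t) • (A⁻¹ * B t))
    have hMt : t • (A - 1) + 1 = t • A + (1-t) • (1 : Matrix (Fin n) (Fin n) ℝ) := by
      rw [smul_sub, sub_smul, one_smul]; abel
    have h1 : t • (A * B t) + (1-t) • B t = 1 := by
      have := hinv t ⟨ht1, ht2⟩
      rw [hMt, Matrix.add_mul, Matrix.smul_mul, Matrix.smul_mul, Matrix.one_mul] at this
      exact this
    have h2 : B t = t⁻¹ • (A⁻¹ - (1-t) • (A⁻¹ * B t)) := by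
      have h3 : A * B t = t⁻¹ • ((1 : Matrix (Fin n) (Fin n) ℝ) - (1-t) • B t) := by
        have e1 : t • (A * B t) = 1 - (1-t) • B t := by rw [eq_sub_iff_add_eq]; exact h1
        rw [← e1, ← smul_assoc, smul_eq_mul, inv_mul_cancel₀ ht0.ne', one_smul]
      calc B t = (A⁻¹ * A) * B t := by rw [hA'A, Matrix.one_mul]
        _ = A⁻¹ * (A * B t) := by rw [Matrix.mul_assoc]
        _ = t⁻¹ • (A⁻¹ * ((1 : Matrix (Fin n) (Fin n) ℝ) - (1-t) • B t)) := by
            rw [h3, Matrix.mul_smul]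
        _ = t⁻¹ • (A⁻¹ - (1-t) • (A⁻¹ * B t)) := by
            rw [Matrix.mul_sub, Matrix.mul_one, Matrix.mul_smul]
    have hNB1 : N (B t) ≤ t⁻¹ * (c + (1-t) * (c * N (B t))) := by
      calc N (B t) = |t⁻¹| * N (A⁻¹ - (1-t) • (A⁻¹ * B t)) := by
            nth_rewrite 1 [h2]; rw [hN_smul]
        _ ≤ t⁻¹ * (c + (1-t) * (c * N (B t))) := by
            rw [abs_of_pos (inv_pos.2 ht0)]
            apply mul_le_mul_of_nonneg_left _ (inv_pos.2 ht0).le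
            have hsub : N (A⁻¹ - (1-t) • (A⁻¹ * B t)) ≤ c + N ((1-t) • (A⁻¹ * B t)) := by
              have := hN_add A⁻¹ (-((1-t) • (A⁻¹ * B t)))
              rw [hNneg] at this
              simpa [sub_eq_add_neg] using this
            have ha : N ((1-t) • (A⁻¹ * B t)) ≤ (1-t) * (c * N (B t)) := by
              rw [hN_smul, abs_of_nonneg (by linarith : (0:ℝ) ≤ 1-t)]
              exact mul_le_mul_of_nonneg_left (hN_mul _ _) (by linarith)
            linarith
    have hNB2 : N (B t) * ((1+c)*t - c) ≤ c := by
      have h4 := mul_le_mul_of_nonneg_left hNB1 ht0.le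
      rw [← mul_assoc, mul_inv_cancel₀ ht0.ne', one_mul] at h4
      nlinarith [hNnonneg (B t)]
    exact (le_div_iff₀ (hden t ⟨ht1, ht2⟩)).2 hNB2
  -- continuity of B on Icc
  have hMcont : Continuous (fun t : ℝ => t • (A - 1) + (1 : Matrix (Fin n) (Fin n) ℝ)) :=
    (continuous_id.smul continuous_const).add continuous_const
  have hBcont : ContinuousOn B (Set.Icc b 1) := by
    intro t ht
    apply ContinuousAt.continuousWithinAt
    have hne : ((t • (A - 1) + 1 : Matrix (Fin n) (Fin n) ℝ).det) ≠ 0 :=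
      isUnit_iff_ne_zero.1 (hdet t ht)
    have h1 : ContinuousAt Inv.inv (t • (A - 1) + (1 : Matrix (Fin n) (Fin n) ℝ)) := by
      apply continuousAt_matrix_inv
      rw [Ring.inverse_eq_inv']
      exact continuousAt_inv₀ hne
    exact ContinuousAt.comp h1 (hMcont.continuousAt (x := t))
  have hBentry : ∀ i j, IntervalIntegrable (fun t => B t i j) volume b 1 := by
    intro i j
    apply ContinuousOn.intervalIntegrable
    rw [Set.uIcc_of_le hb1']
    exact ((continuous_apply j).comp (continuous_apply i)).comp_continuousOn hBcont
  -- finite subadditivity of N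
  have hNsum : ∀ {ι : Type} (s : Finset ι) (f : ι → Matrix (Fin n) (Fin n) ℝ),
      N (∑ i ∈ s, f i) ≤ ∑ i ∈ s, N (f i) := by
    intro ι s f
    classical
    induction s using Finset.induction with
    | empty => simp [hN0]
    | insert _ _ h ih =>
      rw [Finset.sum_insert h, Finset.sum_insert h]
      exact (hN_add _ _).trans (by linarith)
  -- continuity of N
  have hNcont : Continuous N := by
    rw [continuous_iff_continuousAt]
    intro X
    have hS : Continuous (fun Y : Matrix (Fin n) (Fin n) ℝ =>
        ∑ i : Fin n, ∑ j : Fin n, |Y i j - X i j| * N (Matrix.single i j 1)) := by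
      apply continuous_finset_sum
      intro i _
      apply continuous_finset_sum
      intro j _
      exact (((continuous_id.matrix_elem i j).sub continuous_const).abs).mul
        continuous_const
    have hbound : ∀ Y Z : Matrix (Fin n) (Fin n) ℝ,
        N Y - N Z ≤ ∑ i : Fin n, ∑ j : Fin n, |(Y - Z) i j| * N (Matrix.single i j 1) := by
      intro Y Z
      have h1 : N Y ≤ N Z + N (Y - Z) := by
        have := hN_add Z (Y - Z); simpa using this
      have h2 : N (Y - Z) ≤ ∑ i : Fin n, ∑ j : Fin n,
          |(Y - Z) i j| * N (Matrix.single i j 1) := by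
        calc N (Y - Z) = N (∑ i : Fin n, ∑ j : Fin n,
              Matrix.single i j ((Y - Z) i j)) := by
              rw [← Matrix.matrix_eq_sum_single]
          _ ≤ ∑ i : Fin n, N (∑ j : Fin n, Matrix.single i j ((Y - Z) i j)) :=
              hNsum _ _
          _ ≤ ∑ i : Fin n, ∑ j : Fin n, N (Matrix.single i j ((Y - Z) i j)) :=
              Finset.sum_le_sum (fun i _ => hNsum _ _)
          _ = ∑ i : Fin n, ∑ j : Fin n, |(Y - Z) i j| * N (Matrix.single i j 1) := by
              refine Finset.sum_congr rfl fun i _ => Finset.sum_congr rfl fun j _ => ?_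
              rw [← hN_smul]
              congr 1
              rw [Matrix.smul_single, smul_eq_mul, mul_one]
      linarith
    have htend : Filter.Tendsto (fun Y => N Y - N X) (nhds X) (nhds 0) := by
      apply squeeze_zero_norm (a := fun Y => ∑ i : Fin n, ∑ j : Fin n,
          |(Y - X) i j| * N (Matrix.single i j 1))
      · intro Y
        rw [Real.norm_eq_abs, abs_sub_le_iff]
        constructor
        · exact hbound Y X
        · calc N X - N Y ≤ ∑ i : Fin n, ∑ j : Fin n,
              |(X - Y) i j| * N (Matrix.single i j 1) := hbound X Y
            _ = ∑ i : Fin n, ∑ j : Fin n,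
              |(Y - X) i j| * N (Matrix.single i j 1) := by
              refine Finset.sum_congr rfl fun i _ => Finset.sum_congr rfl fun j _ => ?_
              congr 1
              rw [← abs_neg]
              congr 1
              simp
      · have := hS.tendsto X
        simpa using this
    have : Filter.Tendsto N (nhds X) (nhds (N X)) := by
      have := htend.add_const (N X)
      simpa using this
    exact this
  have hNBint : IntervalIntegrable (fun t => N (B t)) volume b 1 := by
    apply ContinuousOn.intervalIntegrable
    rw [Set.uIcc_of_le hb1']
    exact hNcont.comp_continuousOn hBcont
  have hφint : IntervalIntegrable (fun t => c / ((1+c)*t - c)) volume b 1 := by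
    apply ContinuousOn.intervalIntegrable
    rw [Set.uIcc_of_le hb1']
    apply ContinuousOn.div continuousOn_const
    · exact ((continuous_const.mul continuous_id).sub continuous_const).continuousOn
    · exact fun t ht => (hden t ht).ne'
  set w : Matrix (Fin n) (Fin n) ℝ := entryIntegral B b 1 with hwdef
  have hw : N w ≤ ∫ t in b..1, N (B t) := by
    by_cases hw0 : w = 0
    · rw [hw0, hN0]
      exact intervalIntegral.integral_nonneg hb1' (fun t _ => hNnonneg _)
    · obtain ⟨g, hg1, hg2⟩ := exists_extension_of_le_sublinear
        (LinearPMap.mkSpanSingleton w (N w) hw0) N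
        (fun r hr X => by rw [hN_smul, abs_of_pos hr]) hN_add (by
          rintro ⟨x, hx⟩
          obtain ⟨a, rfl⟩ := Submodule.mem_span_singleton.1 hx
          rw [LinearPMap.mkSpanSingleton'_apply]
          rw [hN_smul, smul_eq_mul]
          exact mul_le_mul_of_nonneg_right (le_abs_self a) (hNnonneg w))
      have hgw : g w = N w := by
        have h := hg1 ⟨w, Submodule.mem_span_singleton_self w⟩
        rw [LinearPMap.mkSpanSingleton_apply] at h
        exact h
      have hrep : ∀ X : Matrix (Fin n) (Fin n) ℝ,
          g X = ∑ i : Fin n, ∑ j : Fin n, X i j * g (Matrix.single i j 1) := by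
        intro X
        conv_lhs => rw [Matrix.matrix_eq_sum_single X]
        rw [map_sum]
        refine Finset.sum_congr rfl fun i _ => ?_
        rw [map_sum]
        refine Finset.sum_congr rfl fun j _ => ?_
        have hsm : Matrix.single i j (X i j) = X i j • Matrix.single i j 1 := by
          rw [Matrix.smul_single, smul_eq_mul, mul_one]
        rw [hsm, _root_.map_smul, smul_eq_mul]
      have hgB_int : IntervalIntegrable (fun t => g (B t)) volume b 1 := by
        have he : (fun t => g (B t)) = ∑ i : Fin n, ∑ j : Fin n,
            (fun t => B t i j * g (Matrix.single i j 1)) := by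
          funext t
          simp only [Finset.sum_apply]
          exact hrep (B t)
        rw [he]
        exact IntervalIntegrable.sum _ (fun i _ =>
          IntervalIntegrable.sum _ (fun j _ => (hBentry i j).mul_const _))
      have hg_int : g w = ∫ t in b..1, g (B t) := by
        rw [hrep]
        have h1 : ∀ i j : Fin n, w i j = ∫ t in b..1, B t i j := fun i j => rfl
        calc ∑ i : Fin n, ∑ j : Fin n, w i j * g (Matrix.single i j 1)
            = ∑ i : Fin n, ∑ j : Fin n,
                ∫ t in b..1, B t i j * g (Matrix.single i j 1) := by
              refine Finset.sum_congr rfl fun i _ => Finset.sum_congr rfl fun j _ => ?_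
              rw [h1, intervalIntegral.integral_mul_const]
          _ = ∑ i : Fin n, ∫ t in b..1, ∑ j : Fin n,
                B t i j * g (Matrix.single i j 1) := by
              refine Finset.sum_congr rfl fun i _ => ?_
              rw [intervalIntegral.integral_finset_sum
                (fun j _ => (hBentry i j).mul_const _)]
          _ = ∫ t in b..1, ∑ i : Fin n, ∑ j : Fin n,
                B t i j * g (Matrix.single i j 1) := by
              have hint_i : ∀ i : Fin n, IntervalIntegrable
                  (fun t => ∑ j : Fin n, B t i j * g (Matrix.single i j 1))
                  volume b 1 := by
                intro i
                have he2 : (fun t => ∑ j : Fin n, B t i j * g (Matrix.single i j 1))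
                    = ∑ j : Fin n, (fun t => B t i j * g (Matrix.single i j 1)) := by
                  funext t; simp [Finset.sum_apply]
                rw [he2]
                exact IntervalIntegrable.sum _ (fun j _ => (hBentry i j).mul_const _)
              rw [intervalIntegral.integral_finset_sum
                (f := fun i t => ∑ j : Fin n, B t i j * g (Matrix.single i j 1))
                (fun i _ => hint_i i)]
          _ = ∫ t in b..1, g (B t) := by
              refine intervalIntegral.integral_congr fun t _ => (hrep (B t)).symm
      calc N w = g w := hgw.symm
        _ = ∫ t in b..1, g (B t) := hg_int
        _ ≤ ∫ t in b..1, N (B t) :=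
            intervalIntegral.integral_mono_on hb1' hgB_int hNBint (fun t _ => hg2 (B t))
  have hIφ : (∫ t in b..1, N (B t)) ≤ ∫ t in b..1, c / ((1+c)*t - c) :=
    intervalIntegral.integral_mono_on hb1' hNBint hφint hφ
  have hcalc : (∫ t in b..1, c / ((1+c)*t - c))
      = (c/(1+c)) * (Real.log ((1+c)*1 - c) - Real.log ((1+c)*b - c)) := by
    have hder : ∀ t ∈ Set.uIcc b 1,
        HasDerivAt (fun t => (c/(1+c)) * Real.log ((1+c)*t - c)) (c / ((1+c)*t - c)) t := by
      intro t ht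
      rw [Set.uIcc_of_le hb1'] at ht
      have hdt := hden t ht
      have h1 : HasDerivAt (fun t : ℝ => (1+c)*t - c) (1+c) t := by
        simpa using ((hasDerivAt_id t).const_mul (1+c)).sub_const c
      have h2 : HasDerivAt (fun t : ℝ => Real.log ((1+c)*t - c)) ((1+c)/((1+c)*t - c)) t :=
        h1.log hdt.ne'
      have h3 := h2.const_mul (c/(1+c))
      refine h3.congr_deriv ?_
      rw [div_mul_div_comm, mul_comm c (1+c), mul_div_mul_left _ _ (by linarith : (0:ℝ) < 1+c).ne']
    rw [intervalIntegral.integral_eq_sub_of_hasDerivAt hder hφint]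
    ring
  have hfinal : (c/(1+c)) * (Real.log ((1+c)*1 - c) - Real.log ((1+c)*b - c))
      ≤ c * (-Real.log b + (1 - b) / (2*b)) := by
    set u : ℝ := c * (1-b) / b with hu_def
    have hu0 : 0 ≤ u := div_nonneg (by nlinarith) hb0.le
    have hu2 : u ≤ 1/2 := by
      rw [hu_def, div_le_iff₀ hb0]; nlinarith
    have h1u : (0:ℝ) < 1 - u := by linarith
    have hbc : (1+c)*b - c = b * (1 - u) := by
      rw [hu_def]; field_simp; ring
    have hlogsplit : Real.log ((1+c)*b - c) = Real.log b + Real.log (1-u) := by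
      rw [hbc, Real.log_mul hb0.ne' h1u.ne']
    have hlog1 : -Real.log (1-u) ≤ u + u^2 := neg_log_one_sub_le hu0 hu2
    have hlogb : Real.log b ≤ b - 1 := Real.log_le_sub_one_of_pos hb0
    have hu_b : u * b = c * (1-b) := by rw [hu_def]; field_simp
    have e1 : u * b ≤ c * (-Real.log b) := by nlinarith
    have e2 : u * (1-b) ≤ (1-b)/(2*b) := by
      rw [hu_def, div_mul_eq_mul_div, div_le_div_iff₀ hb0 (by positivity)]
      nlinarith [mul_le_mul_of_nonneg_right hkey
        (mul_nonneg (by linarith : (0:ℝ) ≤ 1-b) hb0.le), sq_nonneg b,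
        mul_le_mul_of_nonneg_left hb2.le (mul_nonneg (by linarith : (0:ℝ) ≤ 1-b) hb0.le)]
    have e3 : c * ((1-b)/(2*b)) = u / 2 := by
      rw [hu_def]; ring
    have e4 : u^2 ≤ u / 2 := by nlinarith
    have e5 : u * (1-b) = u - u * b := by ring
    have hL : -Real.log b - Real.log (1-u) ≤
        (1+c) * (-Real.log b + (1-b)/(2*b)) := by
      have hexpand : (1+c) * (-Real.log b + (1-b)/(2*b))
          = -Real.log b + (1-b)/(2*b) + c * (-Real.log b) + c * ((1-b)/(2*b)) := by ring
      rw [hexpand]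
      linarith
    have hone : (1+c)*1 - c = (1:ℝ) := by ring
    calc (c/(1+c)) * (Real.log ((1+c)*1 - c) - Real.log ((1+c)*b - c))
        = (c/(1+c)) * (-Real.log b - Real.log (1-u)) := by
          rw [hone, Real.log_one, hlogsplit]; ring
      _ ≤ (c/(1+c)) * ((1+c) * (-Real.log b + (1-b)/(2*b))) :=
          mul_le_mul_of_nonneg_left hL (by positivity)
      _ = c * (-Real.log b + (1-b)/(2*b)) := by
          rw [← mul_assoc, div_mul_cancel₀ _ (by positivity : (1:ℝ)+c ≠ 0)]
  have hNw : N w ≤ c * (-Real.log b + (1-b)/(2*b)) :=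
    hw.trans (hIφ.trans (le_of_le_of_eq (le_of_eq hcalc) rfl |>.trans hfinal))
  calc N ((A - 1) * w) ≤ N (A - 1) * N w := hN_mul _ _
    _ ≤ N (A - 1) * (c * (-Real.log b + (1-b)/(2*b))) :=
        mul_le_mul_of_nonneg_left hNw (hNnonneg _)
    _ = (-Real.log b + (1-b)/(2*b)) * (N (A-1) * c) := by ring
end

section
/- Let n ≥ 1, let A be an invertible n×n real matrix, and let ‖·‖ be a consistent matrix norm. If 2‖A^{-1}‖/(2‖A^{-1}‖+1) ≤ b < 1, then (A−I) · ∫_b^1 (t(A−I)+I)^{-1} dt = (A−I)A^{-1}·[ −log(b)·I + ∑_{k=1}^∞ A^{-k} · ∫_b^1 (1/t)·((t−1)/t)^k dt ], where the series on the right converges in the space of n×n matrices. -/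
open MeasureTheory

private lemma aux_geom {R : Type*} [Ring R] [TopologicalSpace R] [IsTopologicalRing R]
    [T2Space R] {x : R} (h : Summable fun k : ℕ => x ^ k) :
    (∑' k : ℕ, x ^ k) * (1 - x) = 1 := by
  have h1 : Summable fun k : ℕ => x ^ (k + 1) := (summable_nat_add_iff 1).2 h
  have hmap : (∑' k : ℕ, x ^ k) * (1 - x) = ∑' k : ℕ, x ^ k * (1 - x) :=
    ((h.hasSum.map (AddMonoidHom.mulRight (1 - x)) (continuous_mul_right _)).tsum_eq).symm
  rw [hmap]
  have he : ∀ k : ℕ, x ^ k * (1 - x) = x ^ k - x ^ (k + 1) := by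
    intro k; rw [mul_sub, mul_one, pow_succ]
  simp_rw [he]
  rw [Summable.tsum_sub h h1, Summable.tsum_eq_zero_add h]
  simp

private noncomputable def entryHom {n : ℕ} (i j : Fin n) :
    Matrix (Fin n) (Fin n) ℝ →+ ℝ :=
  AddMonoidHom.mk' (fun X => X i j) fun _ _ => rfl

private lemma hasSum_entry {n : ℕ} {F : ℕ → Matrix (Fin n) (Fin n) ℝ}
    {S : Matrix (Fin n) (Fin n) ℝ} (h : HasSum F S) (i j : Fin n) :
    HasSum (fun k => F k i j) (S i j) :=
  h.map (entryHom i j) (continuous_apply_apply i j)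

private lemma aux_std {n : ℕ} (X : Matrix (Fin n) (Fin n) ℝ) (i j : Fin n) :
    Matrix.single i i 1 * X * Matrix.single j j 1
      = X i j • Matrix.single i j 1 := by
  ext a c
  simp only [Matrix.mul_apply, Matrix.single, Matrix.smul_apply, Matrix.of_apply,
    ite_and, smul_eq_mul]
  simp [Finset.sum_ite_eq, Finset.sum_ite_eq', ite_and, mul_comm]
  split_ifs <;> simp_all

/-- Neumann-series expansion of the right-endpoint truncated integral. -/
theorem stmt_3 {n : ℕ} (hn : 1 ≤ n) (A : Matrix (Fin n) (Fin n) ℝ) (hA : IsUnit A)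
    (N : Matrix (Fin n) (Fin n) ℝ → ℝ)
    (hN_def : ∀ X, N X = 0 ↔ X = 0)
    (hN_add : ∀ X Y, N (X + Y) ≤ N X + N Y)
    (hN_smul : ∀ (c : ℝ) (X), N (c • X) = |c| * N X)
    (hN_mul : ∀ X Y, N (X * Y) ≤ N X * N Y)
    (b : ℝ) (hb1 : 2 * N A⁻¹ / (2 * N A⁻¹ + 1) ≤ b) (hb2 : b < 1) :
    (Summable fun k : ℕ =>
        (∫ t in b..(1 : ℝ), (1 / t) * ((t - 1) / t) ^ (k + 1)) • (A⁻¹) ^ (k + 1)) ∧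
      (A - 1) * entryIntegral (fun t => (t • (A - 1) + 1)⁻¹) b 1 =
        (A - 1) * A⁻¹ *
          ((-Real.log b) • (1 : Matrix (Fin n) (Fin n) ℝ) +
            ∑' k : ℕ,
              (∫ t in b..(1 : ℝ), (1 / t) * ((t - 1) / t) ^ (k + 1)) • (A⁻¹) ^ (k + 1)) := by
  classical
  have i0 : Fin n := ⟨0, hn⟩
  set B := A⁻¹ with hBdef
  have hd := (Matrix.isUnit_iff_isUnit_det A).mp hA
  have hBA : B * A = 1 := Matrix.nonsing_inv_mul A hd
  -- basic properties of N
  have hN0 : N 0 = 0 := (hN_def 0).2 rfl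
  have hNneg : ∀ X, N (-X) = N X := by
    intro X
    have h := hN_smul (-1) X
    simpa using h
  have hNnn : ∀ X, 0 ≤ N X := by
    intro X
    have h := hN_add X (-X)
    rw [add_neg_cancel, hN0, hNneg] at h
    linarith
  set r := N B with hrdef
  have hB0 : B ≠ 0 := by
    intro h
    have h1 : (1 : Matrix (Fin n) (Fin n) ℝ) = 0 := by rw [← hBA, h, zero_mul]
    have h2 := congrFun (congrFun h1 i0) i0
    simp [Matrix.one_apply] at h2
  have hrpos : 0 < r := (hNnn B).lt_of_ne fun h => hB0 ((hN_def B).1 h.symm)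
  have hb0 : 0 < b := lt_of_lt_of_le (by positivity) hb1
  set ρ := 1 / (2 * r) with hρdef
  have hρpos : 0 < ρ := by positivity
  have hρr : ρ * r = 1 / 2 := by
    rw [hρdef]; field_simp
  have hhalf : ∀ m : ℕ, ρ ^ m * r ^ m = (1 / 2 : ℝ) ^ m := fun m => by
    rw [← mul_pow, hρr]
  -- the bound on |(t-1)/t|
  have hq : ∀ t : ℝ, b ≤ t → t ≤ 1 → |(t - 1) / t| ≤ ρ := by
    intro t h1 h2
    have ht0 : 0 < t := lt_of_lt_of_le hb0 h1
    have habs : |(t - 1) / t| = (1 - t) / t := by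
      rw [abs_div, abs_of_pos ht0, abs_of_nonpos (by linarith)]
      ring
    have hbr : (1 - b) * (2 * r) ≤ b := by
      rw [div_le_iff₀ (by positivity)] at hb1
      nlinarith
    rw [habs, hρdef, div_le_div_iff₀ ht0 (by positivity)]
    nlinarith
  -- entrywise comparison constants
  have hCex : ∀ i j : Fin n, ∃ C : ℝ, 0 < C ∧ ∀ X : Matrix (Fin n) (Fin n) ℝ,
      |X i j| ≤ C * N X := by
    intro i j
    have hsne : ∀ a c : Fin n, (Matrix.single a c (1 : ℝ)) ≠ 0 := by
      intro a c h
      have h2 := congrFun (congrFun h a) c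
      simp [Matrix.single] at h2
    have hpos : ∀ a c : Fin n, 0 < N (Matrix.single a c 1) := fun a c =>
      (hNnn _).lt_of_ne fun h => hsne a c ((hN_def _).1 h.symm)
    refine ⟨N (Matrix.single i i 1) * N (Matrix.single j j 1) /
        N (Matrix.single i j 1),
      div_pos (mul_pos (hpos i i) (hpos j j)) (hpos i j), ?_⟩
    intro X
    have h1 : N (X i j • Matrix.single i j 1)
        ≤ N (Matrix.single i i 1) * N X * N (Matrix.single j j 1) := by
      rw [← aux_std X i j]
      calc N (Matrix.single i i 1 * X * Matrix.single j j 1)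
          ≤ N (Matrix.single i i 1 * X) * N (Matrix.single j j 1) :=
            hN_mul _ _
        _ ≤ N (Matrix.single i i 1) * N X * N (Matrix.single j j 1) :=
            mul_le_mul_of_nonneg_right (hN_mul _ _) (hNnn _)
    rw [hN_smul] at h1
    rw [div_mul_eq_mul_div, le_div_iff₀ (hpos i j)]
    nlinarith [hpos i j, hNnn X, abs_nonneg (X i j)]
  choose C hCpos hC using hCex
  set Cm : ℝ := ∑ i : Fin n, ∑ j : Fin n, C i j with hCmdef
  have hCle : ∀ i j : Fin n, C i j ≤ Cm := by
    intro i j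
    calc C i j ≤ ∑ l : Fin n, C i l :=
          Finset.single_le_sum (fun l _ => (hCpos i l).le) (Finset.mem_univ j)
      _ ≤ Cm :=
          Finset.single_le_sum (f := fun a => ∑ l : Fin n, C a l)
            (fun a _ => Finset.sum_nonneg fun l _ => (hCpos a l).le) (Finset.mem_univ i)
  have hCmpos : 0 < Cm := lt_of_lt_of_le (hCpos i0 i0) (hCle i0 i0)
  letI : NormedAddCommGroup (Matrix (Fin n) (Fin n) ℝ) := Matrix.normedAddCommGroup
  letI : NormedSpace ℝ (Matrix (Fin n) (Fin n) ℝ) := Matrix.normedSpace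
  have hnormN : ∀ X : Matrix (Fin n) (Fin n) ℝ, ‖X‖ ≤ Cm * N X := by
    intro X
    refine (Matrix.norm_le_iff (mul_nonneg hCmpos.le (hNnn X))).2 fun i j => ?_
    exact (hC i j X).trans (mul_le_mul_of_nonneg_right (hCle i j) (hNnn X))
  -- power bounds
  have hNpow : ∀ k : ℕ, N (B ^ (k + 1)) ≤ r ^ (k + 1) := by
    intro k
    induction k with
    | zero => simp [hrdef]
    | succ m ih =>
      calc N (B ^ (m + 2)) = N (B ^ (m + 1) * B) := by rw [pow_succ]
        _ ≤ N (B ^ (m + 1)) * N B := hN_mul _ _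
        _ ≤ r ^ (m + 1) * r := mul_le_mul ih le_rfl (hNnn B) (pow_nonneg hrpos.le _)
        _ = r ^ (m + 2) := (pow_succ r (m + 1)).symm
  have hentry : ∀ (k : ℕ) (i j : Fin n), |(B ^ (k + 1)) i j| ≤ C i j * r ^ (k + 1) :=
    fun k i j => (hC i j _).trans (mul_le_mul_of_nonneg_left (hNpow k) (hCpos i j).le)
  have hnormBpow : ∀ k : ℕ, ‖B ^ (k + 1)‖ ≤ Cm * r ^ (k + 1) :=
    fun k => (hnormN _).trans (mul_le_mul_of_nonneg_left (hNpow k) hCmpos.le)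
  -- bound for the coefficients
  have hcb : ∀ k : ℕ, |∫ t in b..(1 : ℝ), (1 / t) * ((t - 1) / t) ^ k|
      ≤ (1 / b) * ρ ^ k * (1 - b) := by
    intro k
    have h := intervalIntegral.norm_integral_le_of_norm_le_const
      (a := b) (b := 1) (C := (1 / b) * ρ ^ k)
      (f := fun t => (1 / t) * ((t - 1) / t) ^ k) ?_
    · rw [Real.norm_eq_abs, abs_of_nonneg (show (0:ℝ) ≤ 1 - b by linarith)] at h
      exact h
    · intro t ht
      rw [Set.uIoc_of_le hb2.le] at ht
      obtain ⟨h1, h2⟩ := ht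
      have ht0 : 0 < t := hb0.trans h1
      rw [Real.norm_eq_abs, abs_mul, abs_pow]
      have h1t : |1 / t| ≤ 1 / b := by
        rw [abs_of_pos (by positivity)]
        exact one_div_le_one_div_of_le hb0 h1.le
      exact mul_le_mul h1t (pow_le_pow_left₀ (abs_nonneg _) (hq t h1.le h2) k)
        (by positivity) (by positivity)
  -- the value of the 0-th coefficient
  have hc0 : (∫ t in b..(1 : ℝ), (1 / t) * ((t - 1) / t) ^ (0 : ℕ)) = -Real.log b := by
    simp only [pow_zero, mul_one]
    rw [integral_one_div]
    · rw [one_div, Real.log_inv]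
    · rw [Set.uIcc_of_le hb2.le]
      rintro ⟨h0, -⟩
      exact absurd h0 (not_le.mpr hb0)
  -- summability of the matrix series (first conjunct)
  have hSum1 : Summable fun k : ℕ =>
      (∫ t in b..(1 : ℝ), (1 / t) * ((t - 1) / t) ^ (k + 1)) • B ^ (k + 1) := by
    apply Summable.of_norm_bounded
      ((summable_geometric_of_lt_one (r := (1/2 : ℝ)) (by norm_num) (by norm_num)).mul_left
        ((1 / b) * (1 - b) * Cm * (1 / 2)))
    intro k
    rw [norm_smul, Real.norm_eq_abs]
    have h3 : |∫ t in b..(1 : ℝ), (1 / t) * ((t - 1) / t) ^ (k + 1)| * ‖B ^ (k + 1)‖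
        ≤ ((1 / b) * ρ ^ (k + 1) * (1 - b)) * (Cm * r ^ (k + 1)) :=
      mul_le_mul (hcb (k + 1)) (hnormBpow k) (norm_nonneg _)
        (mul_nonneg (mul_nonneg (by positivity) (by positivity)) (by linarith))
    refine h3.trans (le_of_eq ?_)
    calc (1 / b) * ρ ^ (k + 1) * (1 - b) * (Cm * r ^ (k + 1))
        = (1 / b) * (1 - b) * Cm * (ρ ^ (k + 1) * r ^ (k + 1)) := by ring
      _ = (1 / b) * (1 - b) * Cm * (1 / 2 : ℝ) ^ (k + 1) := by rw [hhalf (k + 1)]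
      _ = (1 / b) * (1 - b) * Cm * (1 / 2) * (1 / 2 : ℝ) ^ k := by ring
  -- scalar summability of the entry series
  have hψ : ∀ i j : Fin n, Summable fun k : ℕ =>
      (∫ t in b..(1 : ℝ), (1 / t) * ((t - 1) / t) ^ k) * (B ^ (k + 1)) i j := by
    intro i j
    apply Summable.of_norm_bounded
      ((summable_geometric_of_lt_one (r := (1/2 : ℝ)) (by norm_num) (by norm_num)).mul_left
        ((1 / b) * (1 - b) * C i j * r))
    intro k
    rw [Real.norm_eq_abs, abs_mul]
    have h3 : |∫ t in b..(1 : ℝ), (1 / t) * ((t - 1) / t) ^ k| * |(B ^ (k + 1)) i j|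
        ≤ ((1 / b) * ρ ^ k * (1 - b)) * (C i j * r ^ (k + 1)) :=
      mul_le_mul (hcb k) (hentry k i j) (abs_nonneg _)
        (mul_nonneg (mul_nonneg (by positivity) (by positivity)) (by linarith))
    refine h3.trans (le_of_eq ?_)
    calc (1 / b) * ρ ^ k * (1 - b) * (C i j * r ^ (k + 1))
        = (1 / b) * (1 - b) * C i j * r * (ρ ^ k * r ^ k) := by ring
      _ = (1 / b) * (1 - b) * C i j * r * (1 / 2 : ℝ) ^ k := by rw [hhalf k]
  -- pointwise Neumann expansion of the inverse
  have hft : ∀ t ∈ Set.Ioc b (1 : ℝ), HasSum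
      (fun k : ℕ => ((1 / t) * ((t - 1) / t) ^ k) • B ^ (k + 1)) ((t • (A - 1) + 1)⁻¹) := by
    intro t ht
    obtain ⟨h1, h2⟩ := ht
    have ht0 : 0 < t := hb0.trans h1
    have hqρ : |(t - 1) / t| ≤ ρ := hq t h1.le h2
    have hpowsum : Summable fun k : ℕ => (((t - 1) / t) • B) ^ k := by
      rw [← summable_nat_add_iff 1]
      apply Summable.of_norm_bounded
        ((summable_geometric_of_lt_one (r := (1/2 : ℝ)) (by norm_num) (by norm_num)).mul_left
          (Cm * (1 / 2)))
      intro k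
      rw [smul_pow, norm_smul, Real.norm_eq_abs, abs_pow]
      have h3 : |(t - 1) / t| ^ (k + 1) * ‖B ^ (k + 1)‖ ≤ ρ ^ (k + 1) * (Cm * r ^ (k + 1)) :=
        mul_le_mul (pow_le_pow_left₀ (abs_nonneg _) hqρ _) (hnormBpow k) (norm_nonneg _)
          (by positivity)
      refine h3.trans (le_of_eq ?_)
      calc ρ ^ (k + 1) * (Cm * r ^ (k + 1)) = Cm * (ρ ^ (k + 1) * r ^ (k + 1)) := by ring
        _ = Cm * (1 / 2 : ℝ) ^ (k + 1) := by rw [hhalf (k + 1)]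
        _ = Cm * (1 / 2) * (1 / 2 : ℝ) ^ k := by ring
    set S := ∑' k : ℕ, (((t - 1) / t) • B) ^ k with hSdef
    have hgeom : S * (1 - ((t - 1) / t) • B) = 1 := aux_geom hpowsum
    have hMfact : t • (A - 1) + 1 = (t • A) * (1 - ((t - 1) / t) • B) := by
      have hAB : A * B = 1 := Matrix.mul_nonsing_inv A hd
      have h1' : t * ((t - 1) / t) = t - 1 := by field_simp
      rw [Matrix.smul_mul, mul_sub, mul_one, Matrix.mul_smul, hAB]
      rw [smul_sub, smul_sub, smul_smul, h1', sub_smul, one_smul]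
      abel
    have hinv : (t • (A - 1) + 1)⁻¹ = (1 / t) • (S * B) := by
      apply Matrix.inv_eq_left_inv
      rw [hMfact]
      have h2' : B * (t • A) = t • (1 : Matrix (Fin n) (Fin n) ℝ) := by
        rw [Matrix.mul_smul, hBA]
      rw [Matrix.smul_mul, ← mul_assoc (S * B), mul_assoc S B, h2', Matrix.mul_smul, mul_one,
        Matrix.smul_mul, hgeom, smul_smul, one_div, inv_mul_cancel₀ ht0.ne', one_smul]
    rw [hinv]
    have h3 : HasSum (fun k : ℕ => (((t - 1) / t) • B) ^ k * B) (S * B) :=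
      hpowsum.hasSum.map (AddMonoidHom.mulRight B) (continuous_mul_right B)
    have h4 := h3.const_smul (1 / t)
    have h5 : ∀ k : ℕ, (1 / t) • ((((t - 1) / t) • B) ^ k * B)
        = ((1 / t) * ((t - 1) / t) ^ k) • B ^ (k + 1) := by
      intro k
      rw [smul_pow, Matrix.smul_mul, ← pow_succ, smul_smul]
    simpa only [h5] using h4
  -- the sum B * T
  set T := ∑' k : ℕ, (∫ t in b..(1 : ℝ), (1 / t) * ((t - 1) / t) ^ (k + 1)) • B ^ (k + 1)
    with hTdef
  have hUsum : HasSum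
      (fun k : ℕ => (∫ t in b..(1 : ℝ), (1 / t) * ((t - 1) / t) ^ (k + 1)) • B ^ (k + 1 + 1))
      (B * T) := by
    have h := hSum1.hasSum.map (AddMonoidHom.mulLeft B) (continuous_mul_left B)
    have h5 : ∀ k : ℕ,
        B * ((∫ t in b..(1 : ℝ), (1 / t) * ((t - 1) / t) ^ (k + 1)) • B ^ (k + 1))
          = (∫ t in b..(1 : ℝ), (1 / t) * ((t - 1) / t) ^ (k + 1)) • B ^ (k + 1 + 1) := by
      intro k
      rw [Matrix.mul_smul, ← pow_succ']
    simpa only [Function.comp_def, AddMonoidHom.coe_mulLeft, h5] using h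
  -- the key identity
  have hkey : entryIntegral (fun t => (t • (A - 1) + 1)⁻¹) b 1
      = B * ((-Real.log b) • (1 : Matrix (Fin n) (Fin n) ℝ) + T) := by
    have hrhs : B * ((-Real.log b) • (1 : Matrix (Fin n) (Fin n) ℝ) + T)
        = (-Real.log b) • B + B * T := by
      rw [mul_add, Matrix.mul_smul, mul_one]
    rw [hrhs]
    ext i j
    -- left-hand side
    have hL : entryIntegral (fun t => (t • (A - 1) + 1)⁻¹) b 1 i j
        = ∑' k : ℕ, (∫ t in b..(1 : ℝ), (1 / t) * ((t - 1) / t) ^ k) * (B ^ (k + 1)) i j := by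
      have e1 : entryIntegral (fun t => (t • (A - 1) + 1)⁻¹) b 1 i j
          = ∫ t in b..(1 : ℝ), ((t • (A - 1) + 1)⁻¹) i j := rfl
      have e2 : ∀ t ∈ Set.Ioc b (1 : ℝ), ((t • (A - 1) + 1)⁻¹) i j
          = ∑' k : ℕ, ((1 / t) * ((t - 1) / t) ^ k) * (B ^ (k + 1)) i j := by
        intro t ht
        have h := hasSum_entry (hft t ht) i j
        simp only [Matrix.smul_apply, smul_eq_mul] at h
        exact h.tsum_eq.symm
      rw [e1, intervalIntegral.integral_of_le hb2.le,
        setIntegral_congr_fun measurableSet_Ioc e2]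
      have hswap : ∫ t in Set.Ioc b (1 : ℝ),
          ∑' k : ℕ, ((1 / t) * ((t - 1) / t) ^ k) * (B ^ (k + 1)) i j
          = ∑' k : ℕ, ∫ t in Set.Ioc b (1 : ℝ),
              ((1 / t) * ((t - 1) / t) ^ k) * (B ^ (k + 1)) i j := by
        apply MeasureTheory.integral_tsum
          (fun k => (by fun_prop :
            Measurable fun t : ℝ => ((1 / t) * ((t - 1) / t) ^ k) * (B ^ (k + 1)) i j
            ).aestronglyMeasurable)
        have key : ∀ k : ℕ, ∫⁻ t in Set.Ioc b (1 : ℝ),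
            ‖((1 / t) * ((t - 1) / t) ^ k) * (B ^ (k + 1)) i j‖₊
              ≤ ENNReal.ofReal (((1 / b) * C i j * r) * (1 / 2 : ℝ) ^ k) := by
          intro k
          have hbd : ∀ t ∈ Set.Ioc b (1 : ℝ),
              |((1 / t) * ((t - 1) / t) ^ k) * (B ^ (k + 1)) i j|
                ≤ ((1 / b) * C i j * r) * (1 / 2 : ℝ) ^ k := by
            intro t ht
            obtain ⟨h1, h2⟩ := ht
            have ht0 : 0 < t := hb0.trans h1
            rw [abs_mul, abs_mul, abs_pow]
            have h1t : |1 / t| ≤ 1 / b := by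
              rw [abs_of_pos (by positivity)]
              exact one_div_le_one_div_of_le hb0 h1.le
            have h3 : |1 / t| * |(t - 1) / t| ^ k * |(B ^ (k + 1)) i j|
                ≤ (1 / b) * ρ ^ k * (C i j * r ^ (k + 1)) :=
              mul_le_mul
                (mul_le_mul h1t (pow_le_pow_left₀ (abs_nonneg _) (hq t h1.le h2) k)
                  (by positivity) (by positivity))
                (hentry k i j) (abs_nonneg _) (by positivity)
            refine h3.trans (le_of_eq ?_)
            calc (1 / b) * ρ ^ k * (C i j * r ^ (k + 1))
                = (1 / b) * C i j * r * (ρ ^ k * r ^ k) := by ring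
              _ = (1 / b) * C i j * r * (1 / 2 : ℝ) ^ k := by rw [hhalf k]
          calc ∫⁻ t in Set.Ioc b (1 : ℝ),
              ‖((1 / t) * ((t - 1) / t) ^ k) * (B ^ (k + 1)) i j‖₊
              ≤ ∫⁻ _ in Set.Ioc b (1 : ℝ),
                  ENNReal.ofReal (((1 / b) * C i j * r) * (1 / 2 : ℝ) ^ k) := by
                apply setLIntegral_mono measurable_const
                intro t ht
                rw [← enorm_eq_nnnorm, ← ofReal_norm]
                exact ENNReal.ofReal_le_ofReal ((Real.norm_eq_abs _).le.trans
                  ((Real.norm_eq_abs _) ▸ hbd t ht))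
            _ = ENNReal.ofReal (((1 / b) * C i j * r) * (1 / 2 : ℝ) ^ k)
                  * volume (Set.Ioc b (1 : ℝ)) := setLIntegral_const _ _
            _ ≤ ENNReal.ofReal (((1 / b) * C i j * r) * (1 / 2 : ℝ) ^ k) * 1 := by
                gcongr
                rw [Real.volume_Ioc]
                exact ENNReal.ofReal_le_one.mpr (by linarith)
            _ = ENNReal.ofReal (((1 / b) * C i j * r) * (1 / 2 : ℝ) ^ k) := mul_one _
        have hsum : Summable fun k : ℕ => ((1 / b) * C i j * r) * (1 / 2 : ℝ) ^ k :=
          (summable_geometric_of_lt_one (by norm_num) (by norm_num)).mul_left _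
        have hne : ∑' k : ℕ, ENNReal.ofReal (((1 / b) * C i j * r) * (1 / 2 : ℝ) ^ k) ≠ ⊤ := by
          rw [← ENNReal.ofReal_tsum_of_nonneg (fun k =>
            mul_nonneg (mul_nonneg (mul_nonneg (by positivity) (hCpos i j).le) hrpos.le)
              (by positivity)) hsum]
          exact ENNReal.ofReal_ne_top
        exact ne_top_of_le_ne_top hne (ENNReal.tsum_le_tsum key)
      rw [hswap]
      refine tsum_congr fun k => ?_
      rw [MeasureTheory.integral_mul_const, ← intervalIntegral.integral_of_le hb2.le]
    -- right-hand side
    have hR : ((-Real.log b) • B + B * T) i j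
        = (-Real.log b) * B i j
          + ∑' k : ℕ, (∫ t in b..(1 : ℝ), (1 / t) * ((t - 1) / t) ^ (k + 1))
              * (B ^ (k + 1 + 1)) i j := by
      have h := hasSum_entry hUsum i j
      simp only [Matrix.smul_apply, smul_eq_mul] at h
      rw [Matrix.add_apply, Matrix.smul_apply, smul_eq_mul, h.tsum_eq]
    rw [hL, hR, Summable.tsum_eq_zero_add (hψ i j)]
    congr 1
    rw [hc0, zero_add, pow_one]
  refine ⟨hSum1, ?_⟩
  rw [hkey, ← mul_assoc]
end

section
/- Let n ≥ 1 and let A be an n×n real matrix whose complex eigenvalues all lie in ℂ∖(−∞,0]. Then the improper integral ∫_{-∞}^{∞} F_DE(x) dx exists and equals ∫_0^1 (t(A−I)+I)^{-1} dt, where F_DE(x) := cosh(x)·sech²(sinh(x))·[(1+tanh(sinh(x)))(A−I)+2I]^{-1}. Consequently (A−I)∫_{-∞}^{∞} F_DE(x) dx = (A−I)∫_0^1 (t(A−I)+I)^{-1} dt. -/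
open MeasureTheory

/-- Entrywise integral of a matrix-valued function over the whole real line. -/
noncomputable def lineIntegral {n : ℕ} (f : ℝ → Matrix (Fin n) (Fin n) ℝ) :
    Matrix (Fin n) (Fin n) ℝ :=
  Matrix.of fun i j => ∫ x : ℝ, f x i j

/-- The integrand of the double exponential transformation. -/
noncomputable def FDE {n : ℕ} (A : Matrix (Fin n) (Fin n) ℝ) (x : ℝ) :
    Matrix (Fin n) (Fin n) ℝ :=
  (Real.cosh x * (1 / Real.cosh (Real.sinh x)) ^ 2) •
    ((1 + Real.tanh (Real.sinh x)) • (A - 1) + (2 : Matrix (Fin n) (Fin n) ℝ))⁻¹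

namespace DEaux
open Set

lemma tanh_eq (y : ℝ) :
    Real.tanh y = (Real.exp (2*y) - 1) / (Real.exp (2*y) + 1) := by
  have h : Real.exp y ≠ 0 := (Real.exp_pos y).ne'
  have h2 : Real.exp y * Real.exp y + 1 ≠ 0 := by positivity
  rw [Real.tanh_eq_sinh_div_cosh, Real.sinh_eq, Real.cosh_eq, two_mul, Real.exp_add,
    Real.exp_neg]
  field_simp

lemma tanh_mem (y : ℝ) : Real.tanh y ∈ Ioo (-1:ℝ) 1 := by
  rw [tanh_eq]
  have h : (0:ℝ) < Real.exp (2*y) := Real.exp_pos _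
  constructor
  · rw [lt_div_iff₀ (by linarith)]; linarith
  · rw [div_lt_one (by linarith)]; linarith

lemma tanh_inj : Function.Injective Real.tanh := by
  intro a b hab
  rw [tanh_eq, tanh_eq] at hab
  have ha := Real.exp_pos (2*a); have hb := Real.exp_pos (2*b)
  have he : Real.exp (2*a) = Real.exp (2*b) := by
    have h1 : Real.exp (2*a) + 1 ≠ 0 := by positivity
    have h2 : Real.exp (2*b) + 1 ≠ 0 := by positivity
    field_simp at hab
    linarith
  have := Real.exp_injective he
  linarith

lemma tanh_surj : ∀ u ∈ Ioo (-1:ℝ) 1, ∃ y, Real.tanh y = u := by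
  intro u hu
  have h1 : (0:ℝ) < 1 + u := by linarith [hu.1]
  have h2 : (0:ℝ) < 1 - u := by linarith [hu.2]
  refine ⟨Real.log ((1+u)/(1-u)) / 2, ?_⟩
  rw [tanh_eq]
  have he : 2 * (Real.log ((1+u)/(1-u)) / 2) = Real.log ((1+u)/(1-u)) := by ring
  rw [he, Real.exp_log (by positivity)]
  rw [div_sub_one h2.ne', div_add_one h2.ne', div_div_div_eq]
  field_simp
  ring

lemma hasDerivAt_tanh (y : ℝ) :
    HasDerivAt Real.tanh ((1 / Real.cosh y) ^ 2) y := by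
  have h := (Real.hasDerivAt_sinh y).div (Real.hasDerivAt_cosh y) (Real.cosh_pos y).ne'
  have e : Real.tanh = fun y => Real.sinh y / Real.cosh y :=
    funext fun y => Real.tanh_eq_sinh_div_cosh y
  rw [e]
  refine h.congr_deriv ?_
  have h1 := Real.cosh_sq_sub_sinh_sq y
  have hc := (Real.cosh_pos y).ne'
  rw [div_pow, one_pow]; congr 1
  nlinarith [h1]




noncomputable def phi (x : ℝ) : ℝ := (Real.tanh (Real.sinh x) + 1) / 2

lemma phi_hasDerivAt (x : ℝ) :
    HasDerivAt phi (Real.cosh x * (1 / Real.cosh (Real.sinh x)) ^ 2 / 2) x := by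
  have h := (hasDerivAt_tanh (Real.sinh x)).comp x (Real.hasDerivAt_sinh x)
  have h2 := (h.add_const 1).div_const 2
  refine h2.congr_deriv ?_
  ring

lemma phi_inj : Function.Injective phi := by
  intro a b hab
  have : Real.tanh (Real.sinh a) = Real.tanh (Real.sinh b) := by
    unfold phi at hab; linarith
  exact Real.sinh_injective (tanh_inj this)

lemma phi_mem (x : ℝ) : phi x ∈ Ioo (0:ℝ) 1 := by
  have h := tanh_mem (Real.sinh x)
  unfold phi
  constructor
  · linarith [h.1]
  · linarith [h.2]

lemma phi_image : phi '' univ = Ioo (0:ℝ) 1 := by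
  ext t
  simp only [image_univ, mem_range, mem_Ioo]
  constructor
  · rintro ⟨x, rfl⟩; exact phi_mem x
  · rintro ⟨h0, h1⟩
    obtain ⟨y, hy⟩ := tanh_surj (2*t - 1) ⟨by linarith, by linarith⟩
    obtain ⟨x, hx⟩ := Real.sinh_surjective y
    exact ⟨x, by unfold phi; rw [hx, hy]; ring⟩

variable {n : ℕ}

lemma isUnit_det (A : Matrix (Fin n) (Fin n) ℝ)
    (hspec : ∀ μ ∈ spectrum ℂ (A.map fun x => (x : ℂ)), ¬(μ.im = 0 ∧ μ.re ≤ 0)) :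
    ∀ t ∈ Icc (0:ℝ) 1, IsUnit (t • (A - 1) + 1).det := by
  intro t ht
  rcases eq_or_lt_of_le ht.1 with h0 | h0
  · simp [← h0]
  rw [isUnit_iff_ne_zero]
  intro hdet
  set μ : ℝ := (t - 1) / t with hμ
  have htμ : t * μ = t - 1 := by rw [hμ]; field_simp
  have hM : t • (A - 1) + 1 = t • (A - μ • (1 : Matrix (Fin n) (Fin n) ℝ)) := by
    rw [smul_sub, smul_sub, smul_smul, htμ, sub_smul, one_smul]
    abel
  rw [hM, Matrix.det_smul] at hdet
  have htn : t ^ Fintype.card (Fin n) ≠ 0 := pow_ne_zero _ h0.ne'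
  have hdr : (A - μ • (1 : Matrix (Fin n) (Fin n) ℝ)).det = 0 := by
    rcases mul_eq_zero.mp hdet with h | h
    · exact absurd h htn
    · exact h
  -- pass to ℂ
  have hdc : ((A - μ • 1).map (algebraMap ℝ ℂ)).det = 0 := by
    rw [← RingHom.mapMatrix_apply, ← RingHom.map_det, hdr, map_zero]
  have hmap : (A - μ • (1 : Matrix (Fin n) (Fin n) ℝ)).map (algebraMap ℝ ℂ)
      = (A.map fun x => (x : ℂ)) - (μ : ℂ) • 1 := by
    ext i j
    by_cases h : i = j <;>
      simp [Matrix.map_apply, Matrix.sub_apply, Matrix.smul_apply, Matrix.one_apply, h]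
  rw [hmap] at hdc
  have hmem : (μ : ℂ) ∈ spectrum ℂ (A.map fun x => (x : ℂ)) := by
    rw [spectrum.mem_iff]
    intro hu
    rw [Matrix.isUnit_iff_isUnit_det, isUnit_iff_ne_zero] at hu
    apply hu
    have : (algebraMap ℂ (Matrix (Fin n) (Fin n) ℂ)) (μ : ℂ) - A.map (fun x => (x:ℂ))
        = -((A.map fun x => (x : ℂ)) - (μ : ℂ) • 1) := by
      rw [Algebra.algebraMap_eq_smul_one]; abel
    rw [this, Matrix.det_neg, hdc, mul_zero]
  have := hspec _ hmem
  apply this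
  refine ⟨Complex.ofReal_im μ, ?_⟩
  rw [Complex.ofReal_re]
  exact div_nonpos_iff.mpr (Or.inr ⟨by linarith [ht.2], h0.le⟩)

lemma contOn (A : Matrix (Fin n) (Fin n) ℝ)
    (hunit : ∀ t ∈ Icc (0:ℝ) 1, IsUnit (t • (A - 1) + 1).det) (i j : Fin n) :
    ContinuousOn (fun t : ℝ => ((t • (A - 1) + 1 : Matrix (Fin n) (Fin n) ℝ))⁻¹ i j)
      (Icc 0 1) := by
  have hM : Continuous fun t : ℝ => (t • (A - 1) + 1 : Matrix (Fin n) (Fin n) ℝ) :=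
    (continuous_id.smul continuous_const).add continuous_const
  have hdet : Continuous fun t : ℝ => (t • (A - 1) + 1 : Matrix (Fin n) (Fin n) ℝ).det :=
    hM.matrix_det
  have hadj : Continuous fun t : ℝ =>
      (t • (A - 1) + 1 : Matrix (Fin n) (Fin n) ℝ).adjugate i j :=
    (hM.matrix_adjugate).matrix_elem i j
  have hne : ∀ t ∈ Icc (0:ℝ) 1, (t • (A - 1) + 1 : Matrix (Fin n) (Fin n) ℝ).det ≠ 0 :=
    fun t ht => (hunit t ht).ne_zero
  have : ∀ t : ℝ, ((t • (A - 1) + 1 : Matrix (Fin n) (Fin n) ℝ))⁻¹ i j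
      = ((t • (A - 1) + 1 : Matrix (Fin n) (Fin n) ℝ).det)⁻¹
        * (t • (A - 1) + 1 : Matrix (Fin n) (Fin n) ℝ).adjugate i j := by
    intro t
    rw [Matrix.inv_def, Ring.inverse_eq_inv', Matrix.smul_apply, smul_eq_mul]
  simp only [this]
  exact (hdet.continuousOn.inv₀ hne).mul hadj.continuousOn

end DEaux

open DEaux Set

/-- The DE change of variables: `∫_{-∞}^{∞} F_DE = ∫_0^1 (t(A−I)+I)⁻¹ dt`. -/
theorem stmt_11 {n : ℕ} (hn : 1 ≤ n) (A : Matrix (Fin n) (Fin n) ℝ)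
    (hspec : ∀ μ ∈ spectrum ℂ (A.map fun x => (x : ℂ)), ¬(μ.im = 0 ∧ μ.re ≤ 0)) :
    (∀ i j, Integrable (fun x => FDE A x i j)) ∧
      lineIntegral (FDE A) = entryIntegral (fun t => (t • (A - 1) + 1)⁻¹) 0 1 ∧
      (A - 1) * lineIntegral (FDE A) =
        (A - 1) * entryIntegral (fun t => (t • (A - 1) + 1)⁻¹) 0 1 := by
  have hunit := isUnit_det A hspec
  set φ' : ℝ → ℝ := fun x => Real.cosh x * (1 / Real.cosh (Real.sinh x)) ^ 2 / 2 with hφ'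
  have hφ'pos : ∀ x, 0 < φ' x := by
    intro x
    have h1 := Real.cosh_pos x
    have h2 := Real.cosh_pos (Real.sinh x)
    positivity
  -- matrix-level pointwise identity
  have hFDE : ∀ x, FDE A x = φ' x • ((phi x) • (A - 1) + 1)⁻¹ := by
    intro x
    have h2 : ((1 + Real.tanh (Real.sinh x)) • (A - 1) + (2 : Matrix (Fin n) (Fin n) ℝ))
        = (2:ℝ) • ((phi x) • (A - 1) + 1) := by
      rw [smul_add, smul_smul]
      congr 1
      · congr 1
        unfold phi
        ring
      · rw [two_smul ℝ (1 : Matrix (Fin n) (Fin n) ℝ), one_add_one_eq_two]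
    have hu : IsUnit ((phi x) • (A - 1) + 1).det :=
      hunit _ (Ioo_subset_Icc_self (phi_mem x))
    haveI : Invertible (2:ℝ) := invertibleOfNonzero two_ne_zero
    rw [FDE, h2, Matrix.inv_smul (A := (phi x) • (A - 1) + 1) (2:ℝ) hu, invOf_eq_inv (2:ℝ), smul_smul]
    have hc : Real.cosh x * (1 / Real.cosh (Real.sinh x)) ^ 2 * 2⁻¹ = φ' x := by
      simp only [hφ']
      ring
    rw [hc]
  have hderiv : ∀ x ∈ (univ : Set ℝ), HasDerivWithinAt phi (φ' x) univ x :=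
    fun x _ => (phi_hasDerivAt x).hasDerivWithinAt
  have hinj : InjOn phi univ := phi_inj.injOn
  -- entrywise facts
  have hint : ∀ i j, Integrable (fun x => FDE A x i j) ∧
      (∫ x : ℝ, FDE A x i j) = ∫ t in (0:ℝ)..1,
        ((t • (A - 1) + 1 : Matrix (Fin n) (Fin n) ℝ))⁻¹ i j := by
    intro i j
    set g : ℝ → ℝ := fun t => ((t • (A - 1) + 1 : Matrix (Fin n) (Fin n) ℝ))⁻¹ i j with hg
    have hgi : IntegrableOn g (Ioo (0:ℝ) 1) :=
      ((contOn A hunit i j).integrableOn_Icc).mono_set Ioo_subset_Icc_self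
    have hptwise : (fun x => |φ' x| • g (phi x)) = fun x => FDE A x i j := by
      funext x
      rw [abs_of_pos (hφ'pos x), hFDE x, Matrix.smul_apply, smul_eq_mul]
    constructor
    · have hiff := integrableOn_image_iff_integrableOn_abs_deriv_smul
        MeasurableSet.univ hderiv hinj g
      rw [phi_image] at hiff
      have h2 := hiff.mp hgi
      rw [hptwise] at h2
      exact integrableOn_univ.mp h2
    · have h := integral_image_eq_integral_abs_deriv_smul MeasurableSet.univ hderiv hinj g
      rw [phi_image, Measure.restrict_univ, hptwise] at h
      rw [intervalIntegral.integral_of_le zero_le_one, integral_Ioc_eq_integral_Ioo]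
      exact h.symm
  have hmain : lineIntegral (FDE A) = entryIntegral (fun t => (t • (A - 1) + 1)⁻¹) 0 1 := by
    ext i j
    simp only [lineIntegral, entryIntegral, Matrix.of_apply]
    exact (hint i j).2
  exact ⟨fun i j => (hint i j).1, hmain, by rw [hmain]⟩
end

section
/- Let n ≥ 1, let A be an n×n real matrix whose complex eigenvalues all lie in ℂ∖(−∞,0], let l ∈ ℝ, and set a = (tanh(sinh(l))+1)/2 ∈ (0,1). Then the improper integral ∫_{-∞}^{l} F_DE(x) dx exists and equals ∫_0^a (t(A−I)+I)^{-1} dt, where F_DE(x) := cosh(x)·sech²(sinh(x))·[(1+tanh(sinh(x)))(A−I)+2I]^{-1}. -/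
open MeasureTheory

noncomputable def phiDE (x : ℝ) : ℝ := (Real.tanh (Real.sinh x) + 1) / 2
noncomputable def phiDE' (x : ℝ) : ℝ :=
  Real.cosh x * (1 / Real.cosh (Real.sinh x)) ^ 2 / 2

lemma tanh_lt_one' (y : ℝ) : Real.tanh y < 1 := by
  rw [Real.tanh_eq_sinh_div_cosh, div_lt_one (Real.cosh_pos y)]
  nlinarith [Real.cosh_sub_sinh y, Real.exp_pos (-y)]

lemma neg_one_lt_tanh' (y : ℝ) : -1 < Real.tanh y := by
  rw [Real.tanh_eq_sinh_div_cosh, lt_div_iff₀ (Real.cosh_pos y)]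
  nlinarith [Real.sinh_add_cosh y, Real.exp_pos y]

lemma hasDerivAt_tanh' (y : ℝ) :
    HasDerivAt Real.tanh ((1 / Real.cosh y) ^ 2) y := by
  have h := (Real.hasDerivAt_sinh y).div (Real.hasDerivAt_cosh y)
    (ne_of_gt (Real.cosh_pos y))
  have e : (Real.cosh y * Real.cosh y - Real.sinh y * Real.sinh y) / Real.cosh y ^ 2
      = (1 / Real.cosh y) ^ 2 := by
    have h2 := Real.cosh_sq_sub_sinh_sq y
    field_simp
    nlinarith [h2]
  rw [e] at h
  exact h.congr_deriv rfl |>.congr_of_eventuallyEq (by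
    filter_upwards with z; rw [Real.tanh_eq_sinh_div_cosh, Pi.div_apply])

lemma hasDerivAt_phiDE (x : ℝ) : HasDerivAt phiDE (phiDE' x) x := by
  have h1 := (hasDerivAt_tanh' (Real.sinh x)).comp x (Real.hasDerivAt_sinh x)
  have h2 := (h1.add_const 1).div_const 2
  refine h2.congr_deriv ?_
  unfold phiDE'; ring

lemma phiDE'_pos (x : ℝ) : 0 < phiDE' x := by
  unfold phiDE'
  have := Real.cosh_pos x
  have := Real.cosh_pos (Real.sinh x)
  positivity

lemma phiDE_mono : StrictMono phiDE :=
  strictMono_of_hasDerivAt_pos hasDerivAt_phiDE phiDE'_pos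

lemma phiDE_pos (x : ℝ) : 0 < phiDE x := by
  unfold phiDE; nlinarith [neg_one_lt_tanh' (Real.sinh x)]

lemma phiDE_lt_one (x : ℝ) : phiDE x < 1 := by
  unfold phiDE; nlinarith [tanh_lt_one' (Real.sinh x)]

lemma exists_tanh_eq {u : ℝ} (h1 : -1 < u) (h2 : u < 1) : ∃ y, Real.tanh y = u := by
  refine ⟨Real.log ((1 + u) / (1 - u)) / 2, ?_⟩
  set y := Real.log ((1 + u) / (1 - u)) / 2 with hy
  have hc : (0:ℝ) < (1 + u) / (1 - u) := div_pos (by linarith) (by linarith)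
  have he : Real.exp y ^ 2 = (1 + u) / (1 - u) := by
    have h3 : ((2:ℕ) : ℝ) * y = Real.log ((1 + u) / (1 - u)) := by
      rw [hy]; push_cast; ring
    rw [← Real.exp_nat_mul, h3, Real.exp_log hc]
  have hE : 0 < Real.exp y := Real.exp_pos y
  have h4 : (1:ℝ) - u ≠ 0 := by linarith
  have he' : Real.exp y ^ 2 * (1 - u) = 1 + u := by
    field_simp at he; exact he
  rw [Real.tanh_eq_sinh_div_cosh, Real.sinh_eq, Real.cosh_eq, Real.exp_neg]
  rw [div_eq_iff (by positivity)]
  field_simp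
  nlinarith [he']

lemma phiDE_image (l : ℝ) : phiDE '' Set.Iic l = Set.Ioc 0 (phiDE l) := by
  ext t
  constructor
  · rintro ⟨x, hx, rfl⟩
    exact ⟨phiDE_pos x, phiDE_mono.monotone hx⟩
  · rintro ⟨ht0, hta⟩
    have ht1 : t < 1 := lt_of_le_of_lt hta (phiDE_lt_one l)
    obtain ⟨y, hy⟩ := exists_tanh_eq (u := 2 * t - 1) (by linarith) (by linarith)
    have hval : phiDE (Real.arsinh y) = t := by
      unfold phiDE; rw [Real.sinh_arsinh, hy]; ring
    exact ⟨Real.arsinh y, phiDE_mono.le_iff_le.mp (by rw [hval]; exact hta), hval⟩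


lemma det_ne_zero_aux {n : ℕ} (A : Matrix (Fin n) (Fin n) ℝ)
    (hspec : ∀ μ ∈ spectrum ℂ (A.map fun x => (x : ℂ)), ¬(μ.im = 0 ∧ μ.re ≤ 0))
    {t : ℝ} (ht0 : 0 ≤ t) (ht1 : t < 1) :
    (t • (A - 1) + 1 : Matrix (Fin n) (Fin n) ℝ).det ≠ 0 := by
  intro hdet
  rcases eq_or_lt_of_le ht0 with h0 | h0
  · rw [← h0] at hdet; simp at hdet
  · set B : Matrix (Fin n) (Fin n) ℂ := A.map fun x => (x : ℂ) with hB
    set μ : ℂ := (((t - 1) / t : ℝ) : ℂ) with hμ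
    have hmap : ((t • (A - 1) + 1 : Matrix (Fin n) (Fin n) ℝ).map fun x => (x : ℂ))
        = (-(t:ℂ)) • (algebraMap ℂ (Matrix (Fin n) (Fin n) ℂ) μ - B) := by
      rw [Algebra.algebraMap_eq_smul_one]
      ext i j
      simp only [Matrix.map_apply, Matrix.add_apply, Matrix.smul_apply, Matrix.sub_apply,
        Matrix.one_apply, hB, smul_eq_mul, hμ]
      split_ifs with h
      · have htC : (t:ℂ) ≠ 0 := by exact_mod_cast h0.ne'
        push_cast
        field_simp
        ring
      · push_cast
        ring
    have hdetC : ((-(t:ℂ)) • (algebraMap ℂ (Matrix (Fin n) (Fin n) ℂ) μ - B)).det = 0 := by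
      rw [← hmap]
      have := (Complex.ofRealHom).map_det (t • (A - 1) + 1 : Matrix (Fin n) (Fin n) ℝ)
      rw [RingHom.mapMatrix_apply] at this
      rw [show ((t • (A - 1) + 1 : Matrix (Fin n) (Fin n) ℝ).map fun x => (x:ℂ))
          = (t • (A - 1) + 1 : Matrix (Fin n) (Fin n) ℝ).map Complex.ofRealHom from rfl, ← this,
        hdet]
      simp
    rw [Matrix.det_smul] at hdetC
    have hne : (-(t:ℂ)) ^ (Fintype.card (Fin n)) ≠ 0 := by
      apply pow_ne_zero
      simp only [neg_ne_zero, Complex.ofReal_ne_zero]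
      · exact_mod_cast h0.ne'
    have hdet2 : (algebraMap ℂ (Matrix (Fin n) (Fin n) ℂ) μ - B).det = 0 := by
      rcases mul_eq_zero.mp hdetC with h | h
      · exact absurd h hne
      · exact h
    have hmem : μ ∈ spectrum ℂ B := by
      rw [spectrum.mem_iff]
      rw [Matrix.isUnit_iff_isUnit_det, hdet2]
      exact fun h => h.ne_zero rfl
    exact hspec μ hmem ⟨Complex.ofReal_im _, by
      rw [hμ, Complex.ofReal_re]
      exact div_nonpos_iff.mpr (Or.inr ⟨by linarith, ht0⟩)⟩

-- continuity of the inverse entries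
lemma cont_inv_entry {n : ℕ} (A : Matrix (Fin n) (Fin n) ℝ) {s : Set ℝ}
    (hdet : ∀ t ∈ s, (t • (A - 1) + 1 : Matrix (Fin n) (Fin n) ℝ).det ≠ 0)
    (i j : Fin n) :
    ContinuousOn (fun t : ℝ => ((t • (A - 1) + 1 : Matrix (Fin n) (Fin n) ℝ))⁻¹ i j) s := by
  have hM : Continuous fun t : ℝ => (t • (A - 1) + 1 : Matrix (Fin n) (Fin n) ℝ) :=
    (continuous_id.smul continuous_const).add continuous_const
  have hd : Continuous fun t : ℝ => (t • (A - 1) + 1 : Matrix (Fin n) (Fin n) ℝ).det :=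
    hM.matrix_det
  have ha : Continuous fun t : ℝ =>
      (t • (A - 1) + 1 : Matrix (Fin n) (Fin n) ℝ).adjugate i j :=
    (hM.matrix_adjugate).matrix_elem i j
  have heq : ∀ t : ℝ, ((t • (A - 1) + 1 : Matrix (Fin n) (Fin n) ℝ))⁻¹ i j
      = ((t • (A - 1) + 1 : Matrix (Fin n) (Fin n) ℝ).det)⁻¹ *
        (t • (A - 1) + 1 : Matrix (Fin n) (Fin n) ℝ).adjugate i j := by
    intro t
    rw [Matrix.inv_def, Matrix.smul_apply, Ring.inverse_eq_inv', smul_eq_mul]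
  simp only [heq]
  exact (hd.continuousOn.inv₀ hdet).mul ha.continuousOn

-- FDE rewriting
lemma FDE_eq {n : ℕ} (A : Matrix (Fin n) (Fin n) ℝ) (x : ℝ)
    (hdet : IsUnit ((phiDE x) • (A - 1) + 1 : Matrix (Fin n) (Fin n) ℝ).det) :
    FDE A x = phiDE' x • ((phiDE x) • (A - 1) + 1 : Matrix (Fin n) (Fin n) ℝ)⁻¹ := by
  have h2 : ((1 + Real.tanh (Real.sinh x)) • (A - 1) + (2 : Matrix (Fin n) (Fin n) ℝ))
      = (2:ℝ) • ((phiDE x) • (A - 1) + 1 : Matrix (Fin n) (Fin n) ℝ) := by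
    rw [smul_add, smul_smul]
    congr 1
    · congr 1
      unfold phiDE; ring
    · rw [two_smul]
      norm_num
  rw [FDE, h2]
  haveI : Invertible (2:ℝ) := invertibleOfNonzero two_ne_zero
  have h3 := Matrix.inv_smul (A := (phiDE x) • (A - 1) + 1) (2:ℝ) hdet
  rw [h3, smul_smul, invOf_eq_inv]
  unfold phiDE'
  congr 1


set_option maxHeartbeats 1000000 in
/-- Left tail of the DE integral equals the left-endpoint truncation of the standard
integral representation. -/
theorem stmt_12 {n : ℕ} (hn : 1 ≤ n) (A : Matrix (Fin n) (Fin n) ℝ)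
    (hspec : ∀ μ ∈ spectrum ℂ (A.map fun x => (x : ℂ)), ¬(μ.im = 0 ∧ μ.re ≤ 0))
    (l : ℝ) (a : ℝ) (hadef : a = (Real.tanh (Real.sinh l) + 1) / 2) :
    (∀ i j, IntegrableOn (fun x => FDE A x i j) (Set.Iic l)) ∧
      (Matrix.of fun i j => ∫ x in Set.Iic l, FDE A x i j) =
        entryIntegral (fun t => (t • (A - 1) + 1)⁻¹) 0 a := by
  have hal : a = phiDE l := hadef
  have ha0 : 0 < a := hal ▸ phiDE_pos l
  have ha1 : a < 1 := hal ▸ phiDE_lt_one l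
  have hdetIcc : ∀ t ∈ Set.Icc (0:ℝ) a,
      (t • (A - 1) + 1 : Matrix (Fin n) (Fin n) ℝ).det ≠ 0 :=
    fun t ht => det_ne_zero_aux A hspec ht.1 (lt_of_le_of_lt ht.2 ha1)
  have hFDE : ∀ x, FDE A x
      = phiDE' x • ((phiDE x) • (A - 1) + 1 : Matrix (Fin n) (Fin n) ℝ)⁻¹ := fun x =>
    FDE_eq A x (isUnit_iff_ne_zero.mpr
      (det_ne_zero_aux A hspec (phiDE_pos x).le (phiDE_lt_one x)))
  have himg : phiDE '' Set.Iic l = Set.Ioc 0 a := by rw [phiDE_image, hal]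
  have hderiv : ∀ x ∈ Set.Iic l, HasDerivWithinAt phiDE (phiDE' x) (Set.Iic l) x :=
    fun x _ => (hasDerivAt_phiDE x).hasDerivWithinAt
  have hinj : Set.InjOn phiDE (Set.Iic l) := phiDE_mono.injective.injOn
  have hintIoc : ∀ i j, IntegrableOn
      (fun t => ((t • (A - 1) + 1 : Matrix (Fin n) (Fin n) ℝ))⁻¹ i j) (Set.Ioc 0 a) := by
    intro i j
    exact ((cont_inv_entry A hdetIcc i j).integrableOn_compact
      isCompact_Icc).mono_set Set.Ioc_subset_Icc_self
  have hfun : ∀ i j, (fun x => FDE A x i j)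
      = fun x => |phiDE' x| •
          (((phiDE x) • (A - 1) + 1 : Matrix (Fin n) (Fin n) ℝ))⁻¹ i j := by
    intro i j; funext x
    rw [hFDE x, abs_of_pos (phiDE'_pos x)]
    simp [Matrix.smul_apply]
  constructor
  · intro i j
    rw [hfun i j]
    exact (integrableOn_image_iff_integrableOn_abs_deriv_smul measurableSet_Iic
      hderiv hinj
      (fun t => ((t • (A - 1) + 1 : Matrix (Fin n) (Fin n) ℝ))⁻¹ i j)).mp
      (by rw [himg]; exact hintIoc i j)
  · ext i j
    simp only [Matrix.of_apply, entryIntegral]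
    rw [hfun i j,
      ← integral_image_eq_integral_abs_deriv_smul measurableSet_Iic hderiv hinj
        (fun t => ((t • (A - 1) + 1 : Matrix (Fin n) (Fin n) ℝ))⁻¹ i j), himg,
      intervalIntegral.integral_of_le ha0.le]
end
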